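/- arXiv:1312.2452 — 10 statements merged into one kernel-verified Lean document; each statement's English description precedes it below -/
import Mathlib

section
/- Let o, a₁, a₂, a₃, a₄ ∈ ℝ² with aᵢ ≠ o for all i and det(w(aᵢ), w(aⱼ)) > 0 for all 1 ≤ i < j ≤ 4, and let x ∈ ℝ² ∖ {o} satisfy det(w(a₁), w(x)) ≥ 0 and det(w(x), w(a₂)) ≥ 0 (i.e., x lies on the boundary arc between a₁ and a₂ not containing o). Then: (i) if det(w(a₁), w(x)) > 0, then (a₁,a₂,a₃,a₄)_o ≤ (a₁,x,a₃,a₄)_o, with equality if and only if det(w(x), w(a₂)) = 0; and (ii) if det(w(x), w(a₂)) > 0, then (a₁,a₂,a₃,a₄)_o ≤ (x,a₂,a₃,a₄)_o, with equality if and only if det(w(a₁), w(x)) = 0. -/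
/-- `det2 u v = u₁v₂ − u₂v₁` for `u, v ∈ ℝ²`. -/
noncomputable def det2 (u v : ℝ × ℝ) : ℝ := u.1 * v.2 - u.2 * v.1

/-- The cross ratio `(a₁,a₂,a₃,a₄)_o` of the four lines through `o` and the `aᵢ`,
expressed in an affine chart, where `w(p) = p − o`. -/
noncomputable def crossRatio (o a₁ a₂ a₃ a₄ : ℝ × ℝ) : ℝ :=
  (det2 (a₁ - o) (a₃ - o) * det2 (a₄ - o) (a₂ - o)) /
  (det2 (a₁ - o) (a₂ - o) * det2 (a₄ - o) (a₃ - o))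

lemma cr_pos_form (o a b c d : ℝ × ℝ) : crossRatio o a b c d =
    (det2 (a - o) (c - o) * det2 (b - o) (d - o)) /
    (det2 (a - o) (b - o) * det2 (c - o) (d - o)) := by
  unfold crossRatio
  rw [show det2 (d - o) (b - o) = -det2 (b - o) (d - o) by unfold det2; ring,
      show det2 (d - o) (c - o) = -det2 (c - o) (d - o) by unfold det2; ring,
      mul_neg, mul_neg, neg_div_neg_eq]

lemma pluecker (u v w z : ℝ × ℝ) :
    det2 u v * det2 w z = det2 u w * det2 v z + det2 w v * det2 u z := by
  unfold det2; ring

/-- Let `o, a₁, a₂, a₃, a₄ ∈ ℝ²` with `aᵢ ≠ o` and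
`det(w(aᵢ), w(aⱼ)) > 0` for `1 ≤ i < j ≤ 4`, and let `x ≠ o` satisfy
`det(w(a₁), w(x)) ≥ 0` and `det(w(x), w(a₂)) ≥ 0` (so `x` lies on the boundary arc
between `a₁` and `a₂` not containing `o`). Then:
(i) if `det(w(a₁), w(x)) > 0`, then `(a₁,a₂,a₃,a₄)_o ≤ (a₁,x,a₃,a₄)_o`, with equality
iff `det(w(x), w(a₂)) = 0`; and
(ii) if `det(w(x), w(a₂)) > 0`, then `(a₁,a₂,a₃,a₄)_o ≤ (x,a₂,a₃,a₄)_o`, with equality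
iff `det(w(a₁), w(x)) = 0`. -/
theorem stmt5 (o a₁ a₂ a₃ a₄ x : ℝ × ℝ)
    (h1 : a₁ ≠ o) (h2 : a₂ ≠ o) (h3 : a₃ ≠ o) (h4 : a₄ ≠ o) (hx : x ≠ o)
    (h12 : 0 < det2 (a₁ - o) (a₂ - o)) (h13 : 0 < det2 (a₁ - o) (a₃ - o))
    (h14 : 0 < det2 (a₁ - o) (a₄ - o)) (h23 : 0 < det2 (a₂ - o) (a₃ - o))
    (h24 : 0 < det2 (a₂ - o) (a₄ - o)) (h34 : 0 < det2 (a₃ - o) (a₄ - o))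
    (h1x : 0 ≤ det2 (a₁ - o) (x - o)) (hx2 : 0 ≤ det2 (x - o) (a₂ - o)) :
    (0 < det2 (a₁ - o) (x - o) →
      crossRatio o a₁ a₂ a₃ a₄ ≤ crossRatio o a₁ x a₃ a₄ ∧
      (crossRatio o a₁ a₂ a₃ a₄ = crossRatio o a₁ x a₃ a₄ ↔
        det2 (x - o) (a₂ - o) = 0)) ∧
    (0 < det2 (x - o) (a₂ - o) →
      crossRatio o a₁ a₂ a₃ a₄ ≤ crossRatio o x a₂ a₃ a₄ ∧
      (crossRatio o a₁ a₂ a₃ a₄ = crossRatio o x a₂ a₃ a₄ ↔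
        det2 (a₁ - o) (x - o) = 0)) := by
  set D12 := det2 (a₁ - o) (a₂ - o) with hD12
  set D13 := det2 (a₁ - o) (a₃ - o) with hD13
  set D14 := det2 (a₁ - o) (a₄ - o) with hD14
  set D23 := det2 (a₂ - o) (a₃ - o) with hD23
  set D24 := det2 (a₂ - o) (a₄ - o) with hD24
  set D34 := det2 (a₃ - o) (a₄ - o) with hD34
  set D1x := det2 (a₁ - o) (x - o) with hD1x
  set Dx2 := det2 (x - o) (a₂ - o) with hDx2
  set Dx3 := det2 (x - o) (a₃ - o) with hDx3
  set Dx4 := det2 (x - o) (a₄ - o) with hDx4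
  -- Plücker relations
  have pl4 : D12 * Dx4 = D1x * D24 + Dx2 * D14 := by
    rw [hD12, hDx4, hD1x, hD24, hDx2, hD14]; unfold det2; ring
  have pl3 : D12 * Dx3 = D1x * D23 + Dx2 * D13 := by
    rw [hD12, hDx3, hD1x, hD23, hDx2, hD13]; unfold det2; ring
  have cr0 : crossRatio o a₁ a₂ a₃ a₄ = D13 * D24 / (D12 * D34) := cr_pos_form o a₁ a₂ a₃ a₄
  have cr1 : crossRatio o a₁ x a₃ a₄ = D13 * Dx4 / (D1x * D34) := cr_pos_form o a₁ x a₃ a₄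
  have cr2 : crossRatio o x a₂ a₃ a₄ = Dx3 * D24 / (Dx2 * D34) := cr_pos_form o x a₂ a₃ a₄
  constructor
  · intro h1x'
    have hxd4 : 0 < Dx4 := by nlinarith
    rw [cr0, cr1]
    constructor
    · rw [div_le_div_iff₀ (by positivity) (by positivity)]
      have key : D13 * Dx4 * (D12 * D34) - D13 * D24 * (D1x * D34)
          = D13 * D34 * (Dx2 * D14) := by linear_combination (D13 * D34) * pl4
      nlinarith [mul_nonneg (mul_nonneg (mul_pos h13 h34).le hx2) h14.le]
    · constructor
      · intro heq
        rw [div_eq_div_iff (by positivity) (by positivity)] at heq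
        have hz : Dx2 * (D13 * D34 * D14) = 0 := by
          linear_combination (-(D13 * D34)) * pl4 - heq
        have : D13 * D34 * D14 ≠ 0 := by positivity
        exact (mul_eq_zero.mp hz).resolve_right this
      · intro hz
        rw [div_eq_div_iff (by positivity) (by positivity)]
        linear_combination (-(D13 * D34)) * pl4 - (D13 * D34 * D14) * hz
  · intro hx2'
    have hxd3 : 0 < Dx3 := by nlinarith
    rw [cr0, cr2]
    constructor
    · rw [div_le_div_iff₀ (by positivity) (by positivity)]
      have key : Dx3 * D24 * (D12 * D34) - D13 * D24 * (Dx2 * D34)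
          = D24 * D34 * (D1x * D23) := by linear_combination (D24 * D34) * pl3
      nlinarith [mul_nonneg (mul_nonneg (mul_pos h24 h34).le h1x) h23.le]
    · constructor
      · intro heq
        rw [div_eq_div_iff (by positivity) (by positivity)] at heq
        have hz : D1x * (D24 * D34 * D23) = 0 := by
          linear_combination (-(D24 * D34)) * pl3 - heq
        have : D24 * D34 * D23 ≠ 0 := by positivity
        exact (mul_eq_zero.mp hz).resolve_right this
      · intro hz
        rw [div_eq_div_iff (by positivity) (by positivity)]
        linear_combination (-(D24 * D34)) * pl3 - (D24 * D34 * D23) * hz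
end

section
/- Let o, a₁, a₂, a₃, a₄ ∈ ℝ² with aᵢ ≠ o for all i and det(w(aᵢ), w(aⱼ)) > 0 for all 1 ≤ i < j ≤ 4, and let y ∈ ℝ² ∖ {o} satisfy det(w(a₃), w(y)) ≥ 0 and det(w(y), w(a₄)) ≥ 0 (i.e., y lies on the boundary arc between a₃ and a₄ not containing o). Then: (i) if det(w(y), w(a₄)) > 0, then (a₁,a₂,a₃,a₄)_o ≤ (a₁,a₂,y,a₄)_o, with equality if and only if det(w(a₃), w(y)) = 0; and (ii) if det(w(a₃), w(y)) > 0, then (a₁,a₂,a₃,a₄)_o ≤ (a₁,a₂,a₃,y)_o, with equality if and only if det(w(y), w(a₄)) = 0. -/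
lemma pluecker_s6 (a b c d : ℝ × ℝ) :
    det2 a b * det2 c d - det2 a c * det2 b d + det2 a d * det2 b c = 0 := by
  simp only [det2]; ring

lemma det2_swap (a b : ℝ × ℝ) : det2 a b = -det2 b a := by simp only [det2]; ring

lemma cr_eq (o p q r s : ℝ × ℝ) :
    crossRatio o p q r s =
      det2 (p - o) (r - o) * det2 (q - o) (s - o) /
      (det2 (p - o) (q - o) * det2 (r - o) (s - o)) := by
  simp only [crossRatio]
  rw [det2_swap (s - o) (q - o), det2_swap (s - o) (r - o), mul_neg, mul_neg,
    neg_div_neg_eq]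

/-- Let `o, a₁, a₂, a₃, a₄ ∈ ℝ²` with `aᵢ ≠ o` and
`det(w(aᵢ), w(aⱼ)) > 0` for `1 ≤ i < j ≤ 4`, and let `y ≠ o` satisfy
`det(w(a₃), w(y)) ≥ 0` and `det(w(y), w(a₄)) ≥ 0` (so `y` lies on the boundary arc
between `a₃` and `a₄` not containing `o`). Then:
(i) if `det(w(y), w(a₄)) > 0`, then `(a₁,a₂,a₃,a₄)_o ≤ (a₁,a₂,y,a₄)_o`, with equality
iff `det(w(a₃), w(y)) = 0`; and
(ii) if `det(w(a₃), w(y)) > 0`, then `(a₁,a₂,a₃,a₄)_o ≤ (a₁,a₂,a₃,y)_o`, with equality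
iff `det(w(y), w(a₄)) = 0`. -/
theorem stmt6 (o a₁ a₂ a₃ a₄ y : ℝ × ℝ)
    (h1 : a₁ ≠ o) (h2 : a₂ ≠ o) (h3 : a₃ ≠ o) (h4 : a₄ ≠ o) (hy : y ≠ o)
    (h12 : 0 < det2 (a₁ - o) (a₂ - o)) (h13 : 0 < det2 (a₁ - o) (a₃ - o))
    (h14 : 0 < det2 (a₁ - o) (a₄ - o)) (h23 : 0 < det2 (a₂ - o) (a₃ - o))
    (h24 : 0 < det2 (a₂ - o) (a₄ - o)) (h34 : 0 < det2 (a₃ - o) (a₄ - o))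
    (h3y : 0 ≤ det2 (a₃ - o) (y - o)) (hy4 : 0 ≤ det2 (y - o) (a₄ - o)) :
    (0 < det2 (y - o) (a₄ - o) →
      crossRatio o a₁ a₂ a₃ a₄ ≤ crossRatio o a₁ a₂ y a₄ ∧
      (crossRatio o a₁ a₂ a₃ a₄ = crossRatio o a₁ a₂ y a₄ ↔
        det2 (a₃ - o) (y - o) = 0)) ∧
    (0 < det2 (a₃ - o) (y - o) →
      crossRatio o a₁ a₂ a₃ a₄ ≤ crossRatio o a₁ a₂ a₃ y ∧
      (crossRatio o a₁ a₂ a₃ a₄ = crossRatio o a₁ a₂ a₃ y ↔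
        det2 (y - o) (a₄ - o) = 0)) := by
  set w1 := a₁ - o with hw1
  set w2 := a₂ - o with hw2
  set w3 := a₃ - o with hw3
  set w4 := a₄ - o with hw4
  set wy := y - o with hwy
  have key1 : det2 w1 wy * det2 w3 w4 - det2 w1 w3 * det2 wy w4
      = det2 w1 w4 * det2 w3 wy := by
    have := pluecker_s6 w1 w3 wy w4
    have h' : det2 w3 wy = -det2 wy w3 := det2_swap _ _
    linarith [this, h']
  have key2 : det2 w2 wy * det2 w3 w4 - det2 w2 w3 * det2 wy w4
      = det2 w2 w4 * det2 w3 wy := by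
    have := pluecker_s6 w2 w3 wy w4
    have h' : det2 w3 wy = -det2 wy w3 := det2_swap _ _
    linarith [this, h']
  constructor
  · intro hy4'
    have e1 : crossRatio o a₁ a₂ a₃ a₄ =
        det2 w1 w3 * det2 w2 w4 / (det2 w1 w2 * det2 w3 w4) := cr_eq o a₁ a₂ a₃ a₄
    have e2 : crossRatio o a₁ a₂ y a₄ =
        det2 w1 wy * det2 w2 w4 / (det2 w1 w2 * det2 wy w4) := cr_eq o a₁ a₂ y a₄
    have hd1 : 0 < det2 w1 w2 * det2 w3 w4 := mul_pos h12 h34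
    have hd2 : 0 < det2 w1 w2 * det2 wy w4 := mul_pos h12 hy4'
    constructor
    · rw [e1, e2, div_le_div_iff₀ hd1 hd2]
      nlinarith [mul_nonneg (mul_nonneg (mul_pos h12 h24).le h14.le) h3y,
        mul_le_mul_of_nonneg_left key1.le (mul_pos h12 h24).le,
        mul_le_mul_of_nonneg_left key1.ge (mul_pos h12 h24).le]
    · rw [e1, e2, div_eq_div_iff hd1.ne' hd2.ne']
      constructor
      · intro h
        have h' : (det2 w1 w2 * det2 w2 w4 * det2 w1 w4) * det2 w3 wy = 0 := by
          linear_combination -(det2 w1 w2 * det2 w2 w4) * key1 - h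
        have hpos : 0 < det2 w1 w2 * det2 w2 w4 * det2 w1 w4 := by positivity
        exact (mul_eq_zero.mp h').resolve_left hpos.ne'
      · intro h
        have h' : det2 w1 wy * det2 w3 w4 = det2 w1 w3 * det2 wy w4 := by
          linear_combination key1 + det2 w1 w4 * h
        linear_combination -(det2 w1 w2 * det2 w2 w4) * h'
  · intro h3y'
    have e1 : crossRatio o a₁ a₂ a₃ a₄ =
        det2 w1 w3 * det2 w2 w4 / (det2 w1 w2 * det2 w3 w4) := cr_eq o a₁ a₂ a₃ a₄
    have e2 : crossRatio o a₁ a₂ a₃ y =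
        det2 w1 w3 * det2 w2 wy / (det2 w1 w2 * det2 w3 wy) := cr_eq o a₁ a₂ a₃ y
    have hd1 : 0 < det2 w1 w2 * det2 w3 w4 := mul_pos h12 h34
    have hd2 : 0 < det2 w1 w2 * det2 w3 wy := mul_pos h12 h3y'
    constructor
    · rw [e1, e2, div_le_div_iff₀ hd1 hd2]
      nlinarith [mul_nonneg (mul_nonneg (mul_pos h12 h13).le h23.le) hy4,
        mul_le_mul_of_nonneg_left key2.le (mul_pos h12 h13).le,
        mul_le_mul_of_nonneg_left key2.ge (mul_pos h12 h13).le]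
    · rw [e1, e2, div_eq_div_iff hd1.ne' hd2.ne']
      constructor
      · intro h
        have h' : (det2 w1 w2 * det2 w1 w3 * det2 w2 w3) * det2 wy w4 = 0 := by
          linear_combination -(det2 w1 w2 * det2 w1 w3) * key2 - h
        have hpos : 0 < det2 w1 w2 * det2 w1 w3 * det2 w2 w3 := by positivity
        exact (mul_eq_zero.mp h').resolve_left hpos.ne'
      · intro h
        have h' : det2 w2 wy * det2 w3 w4 = det2 w2 w4 * det2 w3 wy := by
          linear_combination key2 + det2 w2 w3 * h
        linear_combination -(det2 w1 w2 * det2 w1 w3) * h'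
end

section
/- Let ρ₁, ρ₂, ρ₃ > 1 and r > 0 be real numbers, with indices read modulo 3 (ρ₀ := ρ₃, ρ₄ := ρ₁), and let i, k ∈ {1, 2, 3}. Set n₁ := ρ_{k−1}·ρ_{i−1}·(ρ_k + r)·(r + ρ_i·ρ_{i+1}) / (r·ρ_{i+1}·(ρ_{k−1} − 1)·(ρ_i − 1)). Then n₁ ≥ ρ_{i−1}, n₁ ≥ 1/(ρ_i − 1), n₁ ≥ ρ_{i−1}·r/(ρ_{i+1}·(ρ_i − 1)), and n₁ ≥ 1/r. -/
private lemma mul3_le {A1 A2 A3 B1 B2 B3 : ℝ} (h1 : B1 ≤ A1) (h2 : B2 ≤ A2)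
    (h3 : B3 ≤ A3) (hB1 : 0 ≤ B1) (hB2 : 0 ≤ B2) (hB3 : 0 ≤ B3) :
    B1 * B2 * B3 ≤ A1 * A2 * A3 :=
  mul_le_mul (mul_le_mul h1 h2 hB2 (hB1.trans h1)) h3 hB3
    (mul_nonneg (hB1.trans h1) (hB2.trans h2))

private lemma mul4_le {A1 A2 A3 A4 B1 B2 B3 B4 : ℝ} (h1 : B1 ≤ A1) (h2 : B2 ≤ A2)
    (h3 : B3 ≤ A3) (h4 : B4 ≤ A4) (hB1 : 0 ≤ B1) (hB2 : 0 ≤ B2) (hB3 : 0 ≤ B3)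
    (hB4 : 0 ≤ B4) :
    B1 * B2 * B3 * B4 ≤ A1 * A2 * A3 * A4 :=
  mul_le_mul (mul3_le h1 h2 h3 hB1 hB2 hB3) h4 hB4
    (mul_nonneg (mul_nonneg (hB1.trans h1) (hB2.trans h2)) (hB3.trans h3))

/-- Let `ρ₁, ρ₂, ρ₃ > 1` and `r > 0`, with indices read modulo 3, and let
`i, k ∈ {1,2,3}`. Set
`n₁ = ρ_{k−1}·ρ_{i−1}·(ρ_k + r)·(r + ρ_i·ρ_{i+1}) / (r·ρ_{i+1}·(ρ_{k−1} − 1)·(ρ_i − 1))`.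
Then `n₁ ≥ ρ_{i−1}`, `n₁ ≥ 1/(ρ_i − 1)`, `n₁ ≥ ρ_{i−1}·r/(ρ_{i+1}·(ρ_i − 1))`, and
`n₁ ≥ 1/r`. -/
theorem stmt11 (ρ : Fin 3 → ℝ) (hρ : ∀ i, 1 < ρ i) (r : ℝ) (hr : 0 < r)
    (i k : Fin 3) (n₁ : ℝ)
    (hn₁ : n₁ = ρ (k - 1) * ρ (i - 1) * (ρ k + r) * (r + ρ i * ρ (i + 1)) /
      (r * ρ (i + 1) * (ρ (k - 1) - 1) * (ρ i - 1))) :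
    n₁ ≥ ρ (i - 1) ∧ n₁ ≥ 1 / (ρ i - 1) ∧
    n₁ ≥ ρ (i - 1) * r / (ρ (i + 1) * (ρ i - 1)) ∧ n₁ ≥ 1 / r := by
  have ha := hρ (k - 1)
  have hb := hρ (i - 1)
  have hc := hρ k
  have hd := hρ i
  have he := hρ (i + 1)
  set a := ρ (k - 1)
  set b := ρ (i - 1)
  set c := ρ k
  set d := ρ i
  set e := ρ (i + 1)
  have hden : 0 < r * e * (a - 1) * (d - 1) :=
    mul_pos (mul_pos (mul_pos hr (by linarith)) (by linarith)) (by linarith)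
  have hed : e * (d - 1) ≤ r + d * e := by nlinarith
  refine ⟨?_, ?_, ?_, ?_⟩ <;> rw [hn₁, ge_iff_le]
  · rw [le_div_iff₀ hden]
    have key : (a - 1) * r * (e * (d - 1)) ≤ a * (c + r) * (r + d * e) :=
      mul3_le (by linarith) (by linarith) hed (by linarith) hr.le
        (by nlinarith)
    nlinarith [mul_le_mul_of_nonneg_left key (by linarith : (0:ℝ) ≤ b)]
  · rw [div_le_div_iff₀ (by linarith) hden]
    have key : (a - 1) * 1 * r * e ≤ a * b * (c + r) * (r + d * e) :=
      mul4_le (by linarith) (by linarith) (by linarith) (by nlinarith)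
        (by linarith) (by linarith) hr.le (by linarith)
    nlinarith [mul_le_mul_of_nonneg_right key (by linarith : (0:ℝ) ≤ d - 1)]
  · rw [div_le_div_iff₀ (mul_pos (by linarith : (0:ℝ) < e) (by linarith : (0:ℝ) < d - 1)) hden]
    have key : (a - 1) * r * r ≤ a * (c + r) * (r + d * e) :=
      mul3_le (by linarith) (by linarith) (by nlinarith) (by linarith) hr.le hr.le
    nlinarith [mul_le_mul_of_nonneg_left key
      (mul_nonneg (by linarith) (mul_nonneg (by linarith) (by linarith)) : (0:ℝ) ≤ b * (e * (d - 1)))]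
  · rw [div_le_div_iff₀ hr hden]
    have key : (a - 1) * 1 * 1 * (e * (d - 1)) ≤ a * b * (c + r) * (r + d * e) :=
      mul4_le (by linarith) (by linarith) (by linarith) hed
        (by linarith) (by linarith) (by linarith) (by nlinarith)
    nlinarith [mul_le_mul_of_nonneg_right key hr.le]
end

section
/- For every L > 0 there exists K₀ > 0 such that for all K ≥ K₀ the following holds: for every increasing sequence (T_j) of positive reals with T_j → ∞ and every choice of maximizers Q_j as in the setup, the sequence F_j = ⌊(T_j − Q_j·K)/L⌋ tends to ∞ as j → ∞. -/
open Filter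

/-- For every `L > 0` there is `K₀ > 0` such that for all `K ≥ K₀`:
for every increasing sequence `(T_j)` of positive reals with `T_j → ∞` and every choice
of maximizers `Q_j` (i.e. for each `j` with `⌊T_j/K⌋ ≥ 1`, `Q_j ∈ {1,…,⌊T_j/K⌋}`
maximizes `m ↦ C(⌊(T_j − mK)/L⌋ + m, m)`), the sequence
`F_j = ⌊(T_j − Q_j·K)/L⌋` tends to `∞`. -/
theorem stmt12 (L : ℝ) (hL : 0 < L) :
    ∃ K₀ : ℝ, 0 < K₀ ∧ ∀ K : ℝ, K₀ ≤ K →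
    ∀ (T : ℕ → ℝ) (Q : ℕ → ℕ), StrictMono T → (∀ j, 0 < T j) →
    Tendsto T atTop atTop →
    (∀ j, 1 ≤ ⌊T j / K⌋₊ →
      1 ≤ Q j ∧ Q j ≤ ⌊T j / K⌋₊ ∧
      ∀ m : ℕ, 1 ≤ m → m ≤ ⌊T j / K⌋₊ →
        Nat.choose (⌊(T j - (m : ℝ) * K) / L⌋₊ + m) m ≤
          Nat.choose (⌊(T j - (Q j : ℝ) * K) / L⌋₊ + Q j) (Q j)) →
    Tendsto (fun j => ⌊(T j - (Q j : ℝ) * K) / L⌋₊) atTop atTop := by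
  refine ⟨L, hL, ?_⟩
  intro K hK T Q hmono hpos hT hmax
  have hK0 : (0:ℝ) < K := lt_of_lt_of_le hL hK
  rw [tendsto_atTop]
  intro N
  -- eventually T j is large enough
  have hev : ∀ᶠ j in atTop, max K (((N:ℝ) + 2) * K + ((N:ℝ) + 1) * L) ≤ T j :=
    hT.eventually_ge_atTop _
  filter_upwards [hev] with j hj
  have hjK : K ≤ T j := le_trans (le_max_left _ _) hj
  have hjBig : ((N:ℝ) + 2) * K + ((N:ℝ) + 1) * L ≤ T j := le_trans (le_max_right _ _) hj
  -- floor T j / K ≥ 1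
  have hfl1 : 1 ≤ ⌊T j / K⌋₊ := by
    rw [Nat.one_le_floor_iff]
    rw [le_div_iff₀ hK0]; linarith
  obtain ⟨hQ1, hQle, hopt⟩ := hmax j hfl1
  set F := ⌊(T j - (Q j : ℝ) * K) / L⌋₊ with hF
  by_contra hcon
  push_neg at hcon
  have hFN : F ≤ N := le_of_lt hcon
  -- Q j * K ≤ T j
  have hQK : (Q j : ℝ) * K ≤ T j := by
    have h1 : (Q j : ℝ) ≤ T j / K := by
      calc (Q j : ℝ) ≤ (⌊T j / K⌋₊ : ℝ) := by exact_mod_cast hQle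
        _ ≤ T j / K := Nat.floor_le (div_nonneg (hpos j).le hK0.le)
    calc (Q j : ℝ) * K ≤ (T j / K) * K := by nlinarith
      _ = T j := by field_simp
  have hx0 : (0:ℝ) ≤ (T j - (Q j : ℝ) * K) / L := by
    apply div_nonneg (by linarith) hL.le
  -- From F ≤ N : T j - Q j K < (N+1) L
  have hlt : (T j - (Q j : ℝ) * K) / L < (N:ℝ) + 1 := by
    have := Nat.lt_floor_add_one ((T j - (Q j : ℝ) * K) / L)
    have hFle : (F:ℝ) ≤ (N:ℝ) := by exact_mod_cast hFN
    linarith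
  have hlt2 : T j - (Q j : ℝ) * K < ((N:ℝ) + 1) * L := by
    rw [div_lt_iff₀ hL] at hlt; linarith
  -- hence Q j ≥ N + 3
  have hQbig : (N:ℕ) + 3 ≤ Q j := by
    by_contra hq
    push_neg at hq
    have hq2 : (Q j : ℝ) ≤ (N:ℝ) + 2 := by
      have : Q j ≤ N + 2 := Nat.lt_succ_iff.mp hq
      exact_mod_cast this
    nlinarith
  have hQ2 : 2 ≤ Q j := le_trans (by omega) hQbig
  -- apply optimality to m = Q j - 1
  have hm1 : 1 ≤ Q j - 1 := by omega
  have hm2 : Q j - 1 ≤ ⌊T j / K⌋₊ := le_trans (Nat.sub_le _ _) hQle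
  have hkey := hopt (Q j - 1) hm1 hm2
  -- F' ≥ F + 1
  have hcast : ((Q j - 1 : ℕ) : ℝ) = (Q j : ℝ) - 1 := by
    have : 1 ≤ Q j := hQ1
    push_cast [this]; ring
  have hF' : F + 1 ≤ ⌊(T j - ((Q j - 1 : ℕ) : ℝ) * K) / L⌋₊ := by
    have heq : (T j - ((Q j - 1 : ℕ) : ℝ) * K) / L
        = (T j - (Q j : ℝ) * K) / L + K / L := by
      rw [hcast]; ring
    have hKL : (1:ℝ) ≤ K / L := (one_le_div hL).mpr hK
    calc F + 1 = ⌊(T j - (Q j : ℝ) * K) / L + 1⌋₊ := by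
          rw [Nat.floor_add_one hx0]
      _ ≤ ⌊(T j - ((Q j - 1 : ℕ) : ℝ) * K) / L⌋₊ := by
          apply Nat.floor_le_floor
          rw [heq]; linarith
  -- monotonicity of choose in n
  have hmono' : Nat.choose (F + 1 + (Q j - 1)) (Q j - 1)
      ≤ Nat.choose (⌊(T j - ((Q j - 1 : ℕ) : ℝ) * K) / L⌋₊ + (Q j - 1)) (Q j - 1) :=
    Nat.choose_le_choose _ (by omega)
  have hchain : Nat.choose (F + Q j) (Q j - 1) ≤ Nat.choose (F + Q j) (Q j) := by
    have h1 : F + 1 + (Q j - 1) = F + Q j := by omega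
    calc Nat.choose (F + Q j) (Q j - 1)
        = Nat.choose (F + 1 + (Q j - 1)) (Q j - 1) := by rw [h1]
      _ ≤ _ := hmono'
      _ ≤ Nat.choose (F + Q j) (Q j) := hkey
  -- identity: C(F+Q, Q) * Q = C(F+Q, Q-1) * (F+1)
  have hid := Nat.choose_succ_right_eq (F + Q j) (Q j - 1)
  have hQsucc : Q j - 1 + 1 = Q j := by omega
  rw [hQsucc] at hid
  have hsub : F + Q j - (Q j - 1) = F + 1 := by omega
  rw [hsub] at hid
  -- contradiction: Q j ≤ F + 1
  have hpos' : 0 < Nat.choose (F + Q j) (Q j) :=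
    Nat.choose_pos (by omega)
  have hfinal : Nat.choose (F + Q j) (Q j) * Q j ≤ Nat.choose (F + Q j) (Q j) * (F + 1) := by
    calc Nat.choose (F + Q j) (Q j) * Q j
        = Nat.choose (F + Q j) (Q j - 1) * (F + 1) := hid
      _ ≤ Nat.choose (F + Q j) (Q j) * (F + 1) :=
          Nat.mul_le_mul_right _ hchain
  have : Q j ≤ F + 1 := Nat.le_of_mul_le_mul_left hfinal hpos'
  omega
end

section
/- For every L > 0 there exists K₀ > 0 such that for all K ≥ K₀ the following holds: for every increasing sequence (T_j) of positive reals with T_j → ∞ and every choice of maximizers Q_j as in the setup, the sequence Q_j tends to ∞ as j → ∞. -/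
open Filter

lemma stmt13_key (L K : ℝ) (hL : 0 < L) (hK : 0 < K) (n : ℕ) (T : ℝ)
    (hT1 : 2 * ((n : ℝ) + 1) * K ≤ T)
    (hT2 : L * (((n : ℝ) + 1) + (n + 1).factorial * 2 ^ (2 * n + 2)) ≤ T)
    (m : ℕ) (hm1 : 1 ≤ m) (hm : m ≤ n) :
    (⌊(T - (m : ℝ) * K) / L⌋₊ + m).choose m <
      (⌊(T - ((n : ℝ) + 1) * K) / L⌋₊ + (n + 1)).choose (n + 1) := by
  set t : ℝ := T / L with ht
  set fN : ℕ := ⌊(T - ((n : ℝ) + 1) * K) / L⌋₊ with hfN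
  set fm : ℕ := ⌊(T - (m : ℝ) * K) / L⌋₊ with hfm
  set fl : ℕ := ⌊T / L⌋₊ with hfl
  have hfacpos : (0 : ℝ) < (n + 1).factorial := by positivity
  have htN : ((n : ℝ) + 1) + (n + 1).factorial * 2 ^ (2 * n + 2) ≤ t := by
    rw [ht, le_div_iff₀ hL]; linarith [hT2]
  have ht0 : (0 : ℝ) < t := by
    have h : (0:ℝ) < ((n : ℝ) + 1) + (n + 1).factorial * 2 ^ (2 * n + 2) := by positivity
    linarith
  have htN' : ((n : ℝ) + 1) ≤ t := by
    have h : (0:ℝ) ≤ ((n + 1).factorial : ℝ) * 2 ^ (2 * n + 2) := by positivity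
    linarith
  have htbig : ((n + 1).factorial : ℝ) * 2 ^ (2 * n + 2) ≤ t := by
    have h : (0:ℝ) ≤ (n : ℝ) + 1 := by positivity
    linarith
  -- lower bound for the (n+1)-term
  have hx : t / 2 ≤ (T - ((n : ℝ) + 1) * K) / L := by
    rw [ht, div_div]
    have h1 : ((n : ℝ) + 1) * K ≤ T / 2 := by nlinarith
    rw [div_le_div_iff₀ (by positivity) hL]
    nlinarith
  have hfN1 : t / 2 < (fN : ℝ) + 1 :=
    hx.trans_lt (Nat.lt_floor_add_one _)
  -- upper bound chain in ℕ
  have hmono : fm ≤ fl := by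
    apply Nat.floor_le_floor
    gcongr
    have hm' : (1:ℝ) ≤ (m:ℝ) := by exact_mod_cast hm1
    nlinarith [hK]
  have hnat : ((fm + m).choose m : ℝ) ≤ ((fl + (n + 1)) ^ n : ℝ) := by
    have h1 : (fm + m).choose m ≤ (fm + m) ^ m := Nat.choose_le_pow _ _
    have h2 : (fm + m) ^ m ≤ (fl + (n + 1)) ^ m :=
      Nat.pow_le_pow_left (by omega) m
    have h3 : (fl + (n + 1)) ^ m ≤ (fl + (n + 1)) ^ n :=
      Nat.pow_le_pow_right (by omega) hm
    exact_mod_cast (h1.trans h2).trans h3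
  have hflt : (fl : ℝ) ≤ t := Nat.floor_le (le_of_lt ht0)
  have hup : ((fl + (n + 1) : ℕ) : ℝ) ^ n ≤ (t + (n + 1)) ^ n := by
    apply pow_le_pow_left₀ (by positivity)
    push_cast; linarith
  -- the key scalar inequality
  have hscalar : ((n + 1).factorial : ℝ) * (t + ((n : ℝ) + 1)) ^ n < ((fN : ℝ) + 1) ^ (n + 1) := by
    have h1 : (t + ((n : ℝ) + 1)) ^ n ≤ (2 * t) ^ n := by
      apply pow_le_pow_left₀ (by positivity); linarith
    have h2 : ((n + 1).factorial : ℝ) * (2 * t) ^ n ≤ (t / 2) ^ (n + 1) := by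
      have hpow : (0:ℝ) < t ^ n := by positivity
      have hkey : ((n + 1).factorial : ℝ) * 2 ^ n * 2 ^ n * 2 ≤ t := by
        have h22 : ((n+1).factorial : ℝ) * 2 ^ (2*n+2) =
            ((n + 1).factorial : ℝ) * 2 ^ n * 2 ^ n * 2 * 2 := by
          rw [two_mul, pow_add, pow_add]; ring
        nlinarith [htbig, hfacpos, pow_pos (by norm_num : (0:ℝ)<2) n]
      have hexp : (t / 2) ^ (n + 1) = (t ^ n * t) / (2 ^ n * 2) := by
        rw [div_pow, pow_succ, pow_succ]
      have h2t : (2 * t) ^ n = 2 ^ n * t ^ n := mul_pow 2 t n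
      rw [hexp, h2t, le_div_iff₀ (by positivity)]
      calc ((n + 1).factorial : ℝ) * (2 ^ n * t ^ n) * (2 ^ n * 2)
          = (((n + 1).factorial : ℝ) * 2 ^ n * 2 ^ n * 2) * t ^ n := by ring
        _ ≤ t * t ^ n := mul_le_mul_of_nonneg_right hkey hpow.le
        _ = t ^ n * t := by ring
    have h3 : (t / 2) ^ (n + 1) < ((fN : ℝ) + 1) ^ (n + 1) := by
      apply pow_lt_pow_left₀ hfN1 (by positivity)
      omega
    calc ((n + 1).factorial : ℝ) * (t + ((n : ℝ) + 1)) ^ n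
        ≤ ((n + 1).factorial : ℝ) * (2 * t) ^ n := by
          apply mul_le_mul_of_nonneg_left h1 (le_of_lt hfacpos)
      _ ≤ (t / 2) ^ (n + 1) := h2
      _ < _ := h3
  -- lower bound for choose via pow_le_choose
  have hlow : ((fN : ℝ) + 1) ^ (n + 1) / (n + 1).factorial ≤
      ((fN + (n + 1)).choose (n + 1) : ℝ) := by
    have := Nat.pow_le_choose (α := ℝ) (n + 1) (fN + (n + 1))
    have hsub : fN + (n + 1) + 1 - (n + 1) = fN + 1 := by omega
    rw [hsub] at this
    push_cast at this ⊢
    convert this using 2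
  have : ((fm + m).choose m : ℝ) < ((fN + (n + 1)).choose (n + 1) : ℝ) := by
    have hmid : (t + ((n : ℝ) + 1)) ^ n < ((fN : ℝ) + 1) ^ (n + 1) / (n + 1).factorial := by
      rw [lt_div_iff₀ hfacpos]; linarith [hscalar]
    calc ((fm + m).choose m : ℝ) ≤ ((fl + (n + 1) : ℕ) : ℝ) ^ n := by push_cast at hnat ⊢; linarith
      _ ≤ (t + ((n : ℝ) + 1)) ^ n := hup
      _ < ((fN : ℝ) + 1) ^ (n + 1) / (n + 1).factorial := hmid
      _ ≤ _ := hlow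
  exact_mod_cast this

/-- In the setup (L > 0, K ≥ K₀, increasing (T_j) of positive reals with
T_j → ∞, maximizers Q_j of m ↦ C(⌊(T_j − mK)/L⌋ + m, m) over {1,…,⌊T_j/K⌋}),
the sequence Q_j tends to ∞. -/
theorem stmt13 (L : ℝ) (hL : 0 < L) :
    ∃ K₀ : ℝ, 0 < K₀ ∧ ∀ K : ℝ, K₀ ≤ K →
    ∀ (T : ℕ → ℝ) (Q : ℕ → ℕ), StrictMono T → (∀ j, 0 < T j) →
    Tendsto T atTop atTop →
    (∀ j, 1 ≤ ⌊T j / K⌋₊ →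
      1 ≤ Q j ∧ Q j ≤ ⌊T j / K⌋₊ ∧
      ∀ m : ℕ, 1 ≤ m → m ≤ ⌊T j / K⌋₊ →
        Nat.choose (⌊(T j - (m : ℝ) * K) / L⌋₊ + m) m ≤
          Nat.choose (⌊(T j - (Q j : ℝ) * K) / L⌋₊ + Q j) (Q j)) →
    Tendsto Q atTop atTop := by
  refine ⟨1, one_pos, fun K hK T Q _ _ hTend hQ => ?_⟩
  have hK0 : (0 : ℝ) < K := lt_of_lt_of_le one_pos hK
  rw [tendsto_atTop]
  intro b
  set n : ℕ := b with hn
  set B : ℝ := max (2 * ((n : ℝ) + 1) * K)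
      (L * (((n : ℝ) + 1) + (n + 1).factorial * 2 ^ (2 * n + 2))) with hB
  filter_upwards [hTend.eventually_ge_atTop B] with j hj
  have hT1 : 2 * ((n : ℝ) + 1) * K ≤ T j := (le_max_left _ _).trans hj
  have hT2 : L * (((n : ℝ) + 1) + (n + 1).factorial * 2 ^ (2 * n + 2)) ≤ T j :=
    (le_max_right _ _).trans hj
  have hfloorN : n + 1 ≤ ⌊T j / K⌋₊ := by
    apply Nat.le_floor
    rw [le_div_iff₀ hK0]
    push_cast
    nlinarith [hK0]
  have h1floor : 1 ≤ ⌊T j / K⌋₊ := le_trans (by omega) hfloorN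
  obtain ⟨hQ1, hQ2, hmax⟩ := hQ j h1floor
  by_contra hcon
  push_neg at hcon
  have hQn : Q j ≤ n := by omega
  have hlt := stmt13_key L K hL hK0 n (T j) hT1 hT2 (Q j) hQ1 hQn
  have hle := hmax (n + 1) (by omega) hfloorN
  push_cast at hle hlt
  omega
end

section
/- For every L > 0 there exists K₀ > 0 such that for all K ≥ K₀ the following holds: for every increasing sequence (T_j) of positive reals with T_j → ∞ and every choice of maximizers Q_j as in the setup, one has 0 ≤ liminf_{j→∞} Q_j/F_j ≤ limsup_{j→∞} Q_j/F_j ≤ 1. -/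
open Filter


lemma keychoose (F Q : ℕ) (hF : 1 ≤ F) (hQ : F + 1 ≤ Q) :
    Nat.choose (F + Q) Q < Nat.choose (F + Q + 1) (Q - 1) := by
  have h1 : Nat.choose (F + Q + 1) (Q - 1) = Nat.choose (F + Q + 1) (F + 2) := by
    rw [← Nat.choose_symm (by omega : Q - 1 ≤ F + Q + 1)]
    congr 1; omega
  have h2 : Nat.choose (F + Q) Q = Nat.choose (F + Q) F := by
    rw [← Nat.choose_symm (by omega : Q ≤ F + Q)]; congr 1; omega
  rw [h1, h2]
  have hpas : Nat.choose (F + Q + 1) (F + 2) =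
      Nat.choose (F + Q) (F + 1) + Nat.choose (F + Q) (F + 2) :=
    Nat.choose_succ_succ (F + Q) (F + 1)
  have hmono : Nat.choose (F + Q) F ≤ Nat.choose (F + Q) (F + 1) := by
    have h := Nat.choose_succ_right_eq (F + Q) F
    have hsub : F + Q - F = Q := by omega
    rw [hsub] at h
    have : Nat.choose (F + Q) (F + 1) * (F + 1) ≥ Nat.choose (F + Q) F * (F + 1) := by
      rw [h]; exact Nat.mul_le_mul_left _ hQ
    exact Nat.le_of_mul_le_mul_right this (by omega)
  have hpos : 0 < Nat.choose (F + Q) (F + 2) := Nat.choose_pos (by omega)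
  omega

lemma floor_add_ge (x y : ℝ) (hx : 0 ≤ x) (hy : 0 ≤ y) :
    ⌊x⌋₊ + ⌊y⌋₊ ≤ ⌊x + y⌋₊ := by
  apply Nat.le_floor
  push_cast
  exact add_le_add (Nat.floor_le hx) (Nat.floor_le hy)

/-- In the setup (L > 0, K ≥ K₀, increasing (T_j) of positive reals with
T_j → ∞, maximizers Q_j, F_j = ⌊(T_j − Q_j K)/L⌋),
0 ≤ liminf Q_j/F_j ≤ limsup Q_j/F_j ≤ 1. -/
theorem stmt14 (L : ℝ) (hL : 0 < L) :
    ∃ K₀ : ℝ, 0 < K₀ ∧ ∀ K : ℝ, K₀ ≤ K →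
    ∀ (T : ℕ → ℝ) (Q : ℕ → ℕ), StrictMono T → (∀ j, 0 < T j) →
    Tendsto T atTop atTop →
    (∀ j, 1 ≤ ⌊T j / K⌋₊ →
      1 ≤ Q j ∧ Q j ≤ ⌊T j / K⌋₊ ∧
      ∀ m : ℕ, 1 ≤ m → m ≤ ⌊T j / K⌋₊ →
        Nat.choose (⌊(T j - (m : ℝ) * K) / L⌋₊ + m) m ≤
          Nat.choose (⌊(T j - (Q j : ℝ) * K) / L⌋₊ + Q j) (Q j)) →
    (0 ≤ Filter.liminf (fun j => (Q j : ℝ) / (⌊(T j - (Q j : ℝ) * K) / L⌋₊ : ℝ)) atTop ∧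
      Filter.liminf (fun j => (Q j : ℝ) / (⌊(T j - (Q j : ℝ) * K) / L⌋₊ : ℝ)) atTop ≤
        Filter.limsup (fun j => (Q j : ℝ) / (⌊(T j - (Q j : ℝ) * K) / L⌋₊ : ℝ)) atTop ∧
      Filter.limsup (fun j => (Q j : ℝ) / (⌊(T j - (Q j : ℝ) * K) / L⌋₊ : ℝ)) atTop ≤ 1) := by
  refine ⟨3 * L, by linarith, fun K hK T Q hTmono hTpos hTtend hmax => ?_⟩
  have hK0 : 0 < K := by linarith
  set u : ℕ → ℝ := fun j => (Q j : ℝ) / (⌊(T j - (Q j : ℝ) * K) / L⌋₊ : ℝ) with hu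
  have h0 : ∀ j, 0 ≤ u j := fun j => div_nonneg (Nat.cast_nonneg _) (Nat.cast_nonneg _)
  have hev : ∀ᶠ j in atTop, u j ≤ 1 := by
    filter_upwards [hTtend.eventually_ge_atTop K] with j hj
    have hN1 : 1 ≤ ⌊T j / K⌋₊ := by
      apply Nat.le_floor
      rw [Nat.cast_one, le_div_iff₀ hK0]; linarith
    obtain ⟨hQ1, hQN, hmaxm⟩ := hmax j hN1
    set F := ⌊(T j - (Q j : ℝ) * K) / L⌋₊ with hF
    rcases Nat.eq_zero_or_pos F with hF0 | hFpos
    · simp only [hu, ← hF, hF0, Nat.cast_zero, div_zero]; norm_num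
    · -- show Q j ≤ F
      have hQK : (Q j : ℝ) * K ≤ T j := by
        have h1 : (Q j : ℝ) ≤ ⌊T j / K⌋₊ := Nat.cast_le.2 hQN
        have h2 : (⌊T j / K⌋₊ : ℝ) ≤ T j / K := Nat.floor_le (div_nonneg (hTpos j).le hK0.le)
        calc (Q j : ℝ) * K ≤ (T j / K) * K := by
              apply mul_le_mul_of_nonneg_right (le_trans h1 h2) hK0.le
          _ = T j := by field_simp
      have hQF : Q j ≤ F := by
        by_contra hcon
        push_neg at hcon
        have hQge : F + 1 ≤ Q j := hcon
        have hQ2 : 2 ≤ Q j := by omega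
        have hm1 : 1 ≤ Q j - 1 := by omega
        have hmN : Q j - 1 ≤ ⌊T j / K⌋₊ := by omega
        have hle := hmaxm (Q j - 1) hm1 hmN
        have hcast : ((Q j - 1 : ℕ) : ℝ) = (Q j : ℝ) - 1 := by
          push_cast [Nat.cast_sub hQ1]; ring
        rw [hcast] at hle
        have hsplit : (T j - ((Q j : ℝ) - 1) * K) / L
            = (T j - (Q j : ℝ) * K) / L + K / L := by ring
        have hfl : F + ⌊K / L⌋₊ ≤ ⌊(T j - ((Q j : ℝ) - 1) * K) / L⌋₊ := by
          rw [hsplit]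
          exact floor_add_ge _ _ (div_nonneg (by linarith) hL.le) (by positivity)
        have hKL : 3 ≤ ⌊K / L⌋₊ := by
          apply Nat.le_floor
          rw [le_div_iff₀ hL]; push_cast; linarith
        have hF2 : F + 2 ≤ ⌊(T j - ((Q j : ℝ) - 1) * K) / L⌋₊ := by omega
        have hbig : Nat.choose (F + Q j + 1) (Q j - 1) ≤
            Nat.choose (⌊(T j - ((Q j : ℝ) - 1) * K) / L⌋₊ + (Q j - 1)) (Q j - 1) := by
          apply Nat.choose_le_choose
          omega
        have hkey := keychoose F (Q j) hFpos hQge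
        omega
      have hFpos' : (0 : ℝ) < (F : ℝ) := by exact_mod_cast hFpos
      simp only [hu, ← hF]
      rw [div_le_one hFpos']
      exact_mod_cast hQF
  have hbA : IsBoundedUnder (· ≤ ·) atTop u := ⟨1, eventually_map.2 hev⟩
  have hbB : IsBoundedUnder (· ≥ ·) atTop u :=
    ⟨0, eventually_map.2 (Eventually.of_forall h0)⟩
  refine ⟨?_, ?_, ?_⟩
  · exact le_liminf_of_le hbA.isCoboundedUnder_ge (Eventually.of_forall h0)
  · exact liminf_le_limsup hbA hbB
  · exact limsup_le_of_le hbB.isCoboundedUnder_le hev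
end

section
/- For every L > 0 there exists K₀ > 0 such that for all K ≥ K₀ the following holds: for every increasing sequence (T_j) of positive reals with T_j → ∞ and every choice of maximizers Q_j as in the setup, there exists α > 0 such that α ≤ liminf_{j→∞} Q_j/T_j, and moreover limsup_{j→∞} Q_j/T_j ≤ 1/(L + K). -/
open Filter


-- C(n, m) ≤ C(n, m+1) when 2m+1 ≤ n  (monotone up to half)
lemma choose_le_succ_of (n m : ℕ) (h : 2*m + 1 ≤ n) :
    Nat.choose n m ≤ Nat.choose n (m+1) := by
  have key := Nat.choose_succ_right_eq n m
  -- C(n, m+1) * (m+1) = C(n, m) * (n - m)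
  have h1 : m + 1 ≤ n - m := by omega
  have := Nat.mul_le_mul_left (Nat.choose n m) h1
  nlinarith [Nat.choose_pos (show m+1 ≤ n by omega), key,
    Nat.mul_le_mul_left (Nat.choose n m) h1]

-- Claim D: decreasing step
lemma claimD (a a' m : ℕ) (ha : a ≤ m + 1) (h2 : a' + 2 ≤ a) :
    Nat.choose (a' + (m+1)) (m+1) < Nat.choose (a + m) m := by
  obtain ⟨b, rfl⟩ : ∃ b, a = b + 2 := ⟨a - 2, by omega⟩
  have h1 : Nat.choose (a' + (m+1)) (m+1) ≤ Nat.choose (b + m + 1) (m+1) :=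
    Nat.choose_le_choose _ (by omega)
  have pascal : Nat.choose (b + m + 2) (m+1)
      = Nat.choose (b + m + 1) m + Nat.choose (b + m + 1) (m+1) := by
    have := Nat.choose_succ_succ (b + m + 1) m
    simpa [Nat.add_assoc] using this
  have hle : Nat.choose (b + m + 2) (m+1) ≤ Nat.choose (b + m + 2) m := by
    have key := Nat.choose_succ_right_eq (b + m + 2) m
    have hnm : b + m + 2 - m = b + 2 := by omega
    rw [hnm] at key
    have : Nat.choose (b+m+2) (m+1) * (m+1) ≤ Nat.choose (b+m+2) m * (m+1) := by
      rw [key]; exact Nat.mul_le_mul_left _ (by omega)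
    exact Nat.le_of_mul_le_mul_right this (by omega)
  have hpos : 0 < Nat.choose (b + m + 1) m := Nat.choose_pos (by omega)
  have : Nat.choose (b + m + 1) (m+1) < Nat.choose (b + m + 2) m := by omega
  have heq : b + 2 + m = b + m + 2 := by omega
  rw [heq]
  omega

-- doubling: C(n+1, m) ≤ 2 * C(n, m) when m ≤ n... need 2m ≤ n+1
lemma choose_succ_le_two_mul (n m : ℕ) (h : 2*m ≤ n + 1) :
    Nat.choose (n+1) m ≤ 2 * Nat.choose n m := by
  cases m with
  | zero => simp
  | succ k =>
    have pascal : Nat.choose (n+1) (k+1) = Nat.choose n k + Nat.choose n (k+1) :=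
      Nat.choose_succ_succ n k
    have h1 : Nat.choose n k ≤ Nat.choose n (k+1) := choose_le_succ_of n k (by omega)
    omega

lemma pow_mul_choose (a' m : ℕ) (h : m ≤ a') :
    ∀ D, Nat.choose (a' + D + m) m ≤ 2^D * Nat.choose (a' + m) m := by
  intro D
  induction D with
  | zero => simp
  | succ D ih =>
    have h1 : Nat.choose (a' + (D+1) + m) m ≤ 2 * Nat.choose (a' + D + m) m := by
      have heq : a' + (D+1) + m = (a' + D + m) + 1 := by omega
      rw [heq]
      exact choose_succ_le_two_mul _ _ (by omega)
    calc Nat.choose (a' + (D+1) + m) m ≤ 2 * Nat.choose (a' + D + m) m := h1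
      _ ≤ 2 * (2^D * Nat.choose (a' + m) m) := Nat.mul_le_mul_left _ ih
      _ = 2^(D+1) * Nat.choose (a' + m) m := by ring

-- Claim I: increasing step
lemma claimI (a a' m D : ℕ) (hd : a ≤ a' + D) (h : (m+1) * 2^D ≤ a') :
    Nat.choose (a + m) m < Nat.choose (a' + (m+1)) (m+1) := by
  have hma : m ≤ a' := by nlinarith [Nat.one_le_two_pow (n := D)]
  have h1 : Nat.choose (a + m) m ≤ Nat.choose (a' + D + m) m :=
    Nat.choose_le_choose _ (by omega)
  have h2 := pow_mul_choose a' m hma D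
  have h3 : (a' + m + 1) * Nat.choose (a' + m) m
      = Nat.choose (a' + m + 1) (m+1) * (m+1) := Nat.add_one_mul_choose_eq (a' + m) m
  have hpos : 0 < Nat.choose (a' + m) m := Nat.choose_pos (by omega)
  have key : (m+1) * Nat.choose (a + m) m < (m+1) * Nat.choose (a' + m + 1) (m+1) := by
    calc (m+1) * Nat.choose (a + m) m ≤ (m+1) * (2^D * Nat.choose (a' + m) m) := by
          exact Nat.mul_le_mul_left _ (le_trans h1 h2)
      _ = ((m+1) * 2^D) * Nat.choose (a' + m) m := by ring
      _ ≤ a' * Nat.choose (a' + m) m := Nat.mul_le_mul_right _ h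
      _ < (a' + m + 1) * Nat.choose (a' + m) m := by
          exact (Nat.mul_lt_mul_right hpos).mpr (by omega)
      _ = (m+1) * Nat.choose (a' + m + 1) (m+1) := by rw [h3]; ring
  have := Nat.lt_of_mul_lt_mul_left key
  have heq : a' + (m+1) = a' + m + 1 := by omega
  rw [heq]
  exact this


lemma a_antitone (L K T : ℝ) (hL : 0 < L) (hK : 0 ≤ K) {p q : ℕ} (h : p ≤ q) :
    ⌊(T - (q:ℝ)*K)/L⌋₊ ≤ ⌊(T - (p:ℝ)*K)/L⌋₊ := by
  apply Nat.floor_mono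
  have hpq : (p:ℝ) ≤ (q:ℝ) := Nat.cast_le.mpr h
  apply div_le_div_of_nonneg_right ?_ hL.le
  nlinarith

lemma drop_ge (L K T : ℝ) (hL : 0 < L) (hK : 3*L ≤ K) (m : ℕ)
    (h : ((m:ℝ)+1)*K ≤ T) :
    ⌊(T - ((m:ℝ)+1)*K)/L⌋₊ + 2 ≤ ⌊(T - (m:ℝ)*K)/L⌋₊ := by
  have hx'0 : 0 ≤ (T - ((m:ℝ)+1)*K)/L := div_nonneg (by linarith) hL.le
  have hKL : (3:ℝ) ≤ K/L := by rw [le_div_iff₀ hL]; linarith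
  have hle : (T - ((m:ℝ)+1)*K)/L + ((3:ℕ):ℝ) ≤ (T - (m:ℝ)*K)/L := by
    have : (T - (m:ℝ)*K)/L - (T - ((m:ℝ)+1)*K)/L = K/L := by field_simp; ring
    push_cast
    linarith
  have := Nat.floor_mono hle
  rw [Nat.floor_add_natCast hx'0 3] at this
  omega

lemma drop_le (L K T : ℝ) (hL : 0 < L) (hK : 0 ≤ K) (m : ℕ)
    (h : ((m:ℝ)+1)*K ≤ T) :
    ⌊(T - (m:ℝ)*K)/L⌋₊ ≤ ⌊(T - ((m:ℝ)+1)*K)/L⌋₊ + (⌊K/L⌋₊ + 1) := by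
  have hx'0 : 0 ≤ (T - ((m:ℝ)+1)*K)/L := div_nonneg (by linarith) hL.le
  have hKL : K/L < ((⌊K/L⌋₊ + 1 : ℕ) : ℝ) := by
    push_cast
    exact Nat.lt_floor_add_one _
  have hle : (T - (m:ℝ)*K)/L ≤ (T - ((m:ℝ)+1)*K)/L + ((⌊K/L⌋₊ + 1 : ℕ):ℝ) := by
    have : (T - (m:ℝ)*K)/L - (T - ((m:ℝ)+1)*K)/L = K/L := by field_simp; ring
    linarith
  have := Nat.floor_mono hle
  rw [Nat.floor_add_natCast hx'0 (⌊K/L⌋₊ + 1)] at this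
  omega

lemma upperQ (L K T : ℝ) (hL : 0 < L) (hK : 3*L ≤ K) (hT : 0 ≤ T)
    (Q : ℕ) (hQ1 : 1 ≤ Q) (hQN : Q ≤ ⌊T/K⌋₊)
    (hmax : ∀ m : ℕ, 1 ≤ m → m ≤ ⌊T/K⌋₊ →
      Nat.choose (⌊(T - (m:ℝ)*K)/L⌋₊ + m) m ≤ Nat.choose (⌊(T - (Q:ℝ)*K)/L⌋₊ + Q) Q) :
    (Q:ℝ) * (L + K) ≤ T + L + 2*K := by
  have hK0 : 0 < K := by linarith
  set N := ⌊T/K⌋₊ with hN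
  set a : ℕ → ℕ := fun m => ⌊(T - (m:ℝ)*K)/L⌋₊ with ha
  set f : ℕ → ℕ := fun m => Nat.choose (a m + m) m with hf
  have hmK : ∀ m : ℕ, m ≤ N → (m:ℝ)*K ≤ T := by
    intro m hm
    have h1 : (m:ℝ) ≤ (N:ℝ) := Nat.cast_le.mpr hm
    have h2 : (N:ℝ) ≤ T/K := Nat.floor_le (div_nonneg hT hK0.le)
    calc (m:ℝ)*K ≤ (T/K)*K := by nlinarith
      _ = T := by field_simp
  by_cases hc : Q + 2 ≤ a Q
  · -- a Q large: T ≥ Q(L+K) directly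
    have h0 : 0 ≤ (T - (Q:ℝ)*K)/L := div_nonneg (by linarith [hmK Q hQN]) hL.le
    have h1 : ((Q:ℝ)+2) ≤ (T - (Q:ℝ)*K)/L := by
      have := Nat.floor_le h0
      have h2 : ((Q+2 : ℕ):ℝ) ≤ ((a Q : ℕ):ℝ) := Nat.cast_le.mpr hc
      push_cast at h2
      linarith
    have := (le_div_iff₀ hL).mp h1
    nlinarith
  · push_neg at hc
    have hc' : a Q ≤ Q + 1 := by omega
    have hP : ∃ m, 1 ≤ m ∧ a m ≤ m + 1 := ⟨Q, hQ1, hc'⟩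
    set m₁ := Nat.find hP with hm₁
    obtain ⟨hm₁1, ham₁⟩ : 1 ≤ m₁ ∧ a m₁ ≤ m₁ + 1 := Nat.find_spec hP
    have hm₁Q : m₁ ≤ Q := Nat.find_min' hP ⟨hQ1, hc'⟩
    -- decreasing step
    have step : ∀ m, m₁ ≤ m → m + 1 ≤ N → f (m+1) < f m := by
      intro m hm hmN
      have hcast : ((m+1 : ℕ):ℝ) = (m:ℝ)+1 := by push_cast; ring
      have hreach : ((m:ℝ)+1)*K ≤ T := by
        have := hmK (m+1) hmN
        rw [hcast] at this; exact this
      have h2 : a (m+1) + 2 ≤ a m := by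
        have := drop_ge L K T hL hK m hreach
        simpa [ha, hcast] using this
      have haM : a m ≤ m + 1 := by
        have h3 : a m ≤ a m₁ := a_antitone L K T hL hK0.le hm
        omega
      exact claimD (a m) (a (m+1)) m haM h2
    -- decreasing chain
    have dec : ∀ n, m₁ + 1 ≤ n → n ≤ N → f n < f m₁ := by
      intro n hn
      induction n, hn using Nat.le_induction with
      | base => intro h; exact step m₁ le_rfl h
      | succ n hn ih =>
        intro h
        have h1 : f (n+1) < f n := step n (by omega) h
        have h2 : f n < f m₁ := ih (by omega)
        omega
    -- Q = m₁
    have hQm₁ : Q = m₁ := by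
      by_contra hne
      have hlt : m₁ + 1 ≤ Q := by omega
      have h1 : f Q < f m₁ := dec Q hlt hQN
      have h2 : f m₁ ≤ f Q := hmax m₁ hm₁1 (le_trans hm₁Q hQN)
      omega
    rcases Nat.lt_or_ge Q 2 with hQ2 | hQ2
    · -- Q = 1
      have : Q = 1 := by omega
      rw [this]
      push_cast
      linarith
    · -- a (Q-1) ≥ Q+1 by minimality
      have hmin : ¬(1 ≤ m₁ - 1 ∧ a (m₁ - 1) ≤ (m₁ - 1) + 1) :=
        Nat.find_min hP (show m₁ - 1 < m₁ by omega)
      push_neg at hmin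
      have h4 : Q + 1 ≤ a (m₁ - 1) := by
        have := hmin (by omega)
        omega
      have hQ1N : m₁ - 1 ≤ N := by omega
      have h0 : 0 ≤ (T - ((m₁-1 : ℕ):ℝ)*K)/L :=
        div_nonneg (by linarith [hmK (m₁-1) hQ1N]) hL.le
      have h5 : ((Q:ℝ)+1) ≤ (T - ((m₁-1:ℕ):ℝ)*K)/L := by
        have hfl := Nat.floor_le h0
        have h6 : ((Q+1 : ℕ):ℝ) ≤ ((a (m₁-1) : ℕ):ℝ) := Nat.cast_le.mpr h4
        push_cast at h6
        exact le_trans h6 hfl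
      have h7 := (le_div_iff₀ hL).mp h5
      have hcast : ((m₁ - 1 : ℕ):ℝ) = (Q:ℝ) - 1 := by
        rw [Nat.cast_sub (by omega)]
        rw [hQm₁]; push_cast; ring
      rw [hcast] at h7
      nlinarith

lemma lowerQ (L K T : ℝ) (hL : 0 < L) (hK : 3*L ≤ K) (hT : 0 ≤ T)
    (Q : ℕ) (hQ1 : 1 ≤ Q) (hQN : Q ≤ ⌊T/K⌋₊)
    (hmax : ∀ m : ℕ, 1 ≤ m → m ≤ ⌊T/K⌋₊ →
      Nat.choose (⌊(T - (m:ℝ)*K)/L⌋₊ + m) m ≤ Nat.choose (⌊(T - (Q:ℝ)*K)/L⌋₊ + Q) Q) :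
    ⌊(T - L)/(K + L*((2^(⌊K/L⌋₊+1) : ℕ):ℝ))⌋₊ ≤ Q := by
  have hK0 : 0 < K := by linarith
  set N := ⌊T/K⌋₊ with hN
  set D := ⌊K/L⌋₊ + 1 with hD
  set R : ℕ := 2^D with hR
  have hR1 : (1:ℝ) ≤ (R:ℝ) := by
    have : 1 ≤ R := Nat.one_le_two_pow
    exact_mod_cast this
  set c : ℝ := K + L*(R:ℝ) with hc
  have hc0 : 0 < c := by nlinarith
  set M := ⌊(T - L)/c⌋₊ with hM
  set a : ℕ → ℕ := fun m => ⌊(T - (m:ℝ)*K)/L⌋₊ with ha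
  set f : ℕ → ℕ := fun m => Nat.choose (a m + m) m with hf
  have hmK : ∀ m : ℕ, m ≤ N → (m:ℝ)*K ≤ T := by
    intro m hm
    have h1 : (m:ℝ) ≤ (N:ℝ) := Nat.cast_le.mpr hm
    have h2 : (N:ℝ) ≤ T/K := Nat.floor_le (div_nonneg hT hK0.le)
    calc (m:ℝ)*K ≤ (T/K)*K := by nlinarith
      _ = T := by field_simp
  have hMN : M ≤ N := by
    apply Nat.floor_mono
    calc (T - L)/c ≤ T/c := div_le_div_of_nonneg_right (by linarith) hc0.le
      _ ≤ T/K := div_le_div_of_nonneg_left hT hK0 (by nlinarith)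
  by_contra hQM'
  push_neg at hQM'
  have hQM : Q + 1 ≤ M := hQM'
  -- bound on M in reals
  have hMle : (M:ℝ) ≤ (T - L)/c := by
    apply Nat.floor_le
    -- M ≥ Q+1 ≥ 2 > 0 so (T-L)/c must be nonneg; prove directly:
    by_contra hneg
    push_neg at hneg
    have : M = 0 := Nat.floor_of_nonpos hneg.le
    omega
  -- increasing step
  have step : ∀ m, m + 1 ≤ M → f m < f (m+1) := by
    intro m hmM
    have hmN : m + 1 ≤ N := le_trans hmM hMN
    have hcast : ((m+1 : ℕ):ℝ) = (m:ℝ)+1 := by push_cast; ring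
    have hreach : ((m:ℝ)+1)*K ≤ T := by
      have := hmK (m+1) hmN
      rw [hcast] at this; exact this
    have hd : a m ≤ a (m+1) + D := by
      have := drop_le L K T hL hK0.le m hreach
      simpa [ha, hcast, hD] using this
    have key : (m+1) * R ≤ a (m+1) := by
      have h1 : ((m+1 : ℕ):ℝ) ≤ (M:ℝ) := Nat.cast_le.mpr hmM
      have h2 : ((m:ℝ)+1)*c ≤ T - L := by
        rw [hcast] at h1
        have := le_trans h1 hMle
        exact (le_div_iff₀ hc0).mp this
      have h3 : ((((m+1) * R + 1 : ℕ)):ℝ) ≤ (T - ((m:ℝ)+1)*K)/L := by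
        rw [le_div_iff₀ hL]
        push_cast
        nlinarith
      have h4 : (m+1) * R + 1 ≤ ⌊(T - ((m:ℝ)+1)*K)/L⌋₊ := Nat.le_floor h3
      have h5 : a (m+1) = ⌊(T - ((m:ℝ)+1)*K)/L⌋₊ := by
        simp [ha, hcast]
      rw [h5]
      omega
    exact claimI (a m) (a (m+1)) m D hd (by rw [← hR]; exact key)
  -- increasing chain from Q to M
  have inc : ∀ n, Q + 1 ≤ n → n ≤ M → f Q < f n := by
    intro n hn
    induction n, hn using Nat.le_induction with
    | base => intro h; exact step Q h
    | succ n hn ih =>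
      intro h
      have h1 : f n < f (n+1) := step n h
      have h2 : f Q < f n := ih (by omega)
      omega
  have hM1 : 1 ≤ M := by omega
  have h1 : f Q < f M := inc M hQM le_rfl
  have h2 : f M ≤ f Q := hmax M hM1 hMN
  omega


/-- In the setup (L > 0, K ≥ K₀, increasing (T_j) of positive reals with
T_j → ∞, maximizers Q_j), there exists α > 0 with α ≤ liminf Q_j/T_j, and
limsup Q_j/T_j ≤ 1/(L + K). -/
theorem stmt15 (L : ℝ) (hL : 0 < L) :
    ∃ K₀ : ℝ, 0 < K₀ ∧ ∀ K : ℝ, K₀ ≤ K →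
    ∀ (T : ℕ → ℝ) (Q : ℕ → ℕ), StrictMono T → (∀ j, 0 < T j) →
    Tendsto T atTop atTop →
    (∀ j, 1 ≤ ⌊T j / K⌋₊ →
      1 ≤ Q j ∧ Q j ≤ ⌊T j / K⌋₊ ∧
      ∀ m : ℕ, 1 ≤ m → m ≤ ⌊T j / K⌋₊ →
        Nat.choose (⌊(T j - (m : ℝ) * K) / L⌋₊ + m) m ≤
          Nat.choose (⌊(T j - (Q j : ℝ) * K) / L⌋₊ + Q j) (Q j)) →
    ∃ α : ℝ, 0 < α ∧ α ≤ Filter.liminf (fun j => (Q j : ℝ) / T j) atTop ∧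
      Filter.limsup (fun j => (Q j : ℝ) / T j) atTop ≤ 1 / (L + K) := by
  refine ⟨3*L, by linarith, ?_⟩
  intro K hKK T Q hmono hpos htend hmaxall
  have hK0 : 0 < K := by linarith
  set c : ℝ := K + L*((2^(⌊K/L⌋₊+1) : ℕ):ℝ) with hc
  have hR1 : (1:ℝ) ≤ ((2^(⌊K/L⌋₊+1) : ℕ):ℝ) := by
    exact_mod_cast Nat.one_le_two_pow
  have hc0 : 0 < c := by rw [hc]; positivity
  refine ⟨1/(2*c), by positivity, ?_, ?_⟩
  · -- liminf bound
    have hlb : ∀ᶠ j in atTop, 1/(2*c) ≤ (Q j : ℝ)/T j := by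
      filter_upwards [htend.eventually_ge_atTop (max K (2*L + 2*c))] with j hj
      have hTK : K ≤ T j := le_trans (le_max_left _ _) hj
      have hTc : 2*L + 2*c ≤ T j := le_trans (le_max_right _ _) hj
      have hT0 : 0 < T j := hpos j
      have hN1 : 1 ≤ ⌊T j / K⌋₊ := by
        apply Nat.le_floor
        rw [Nat.cast_one, le_div_iff₀ hK0]
        linarith
      obtain ⟨hQ1, hQN, hmax⟩ := hmaxall j hN1
      have hMQ := lowerQ L K (T j) hL hKK hT0.le (Q j) hQ1 hQN hmax
      have hMr : (T j - L)/c < (⌊(T j - L)/c⌋₊ : ℝ) + 1 := Nat.lt_floor_add_one _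
      have hQr : (⌊(T j - L)/c⌋₊ : ℝ) ≤ (Q j : ℝ) := Nat.cast_le.mpr hMQ
      rw [div_le_div_iff₀ (by positivity) hT0]
      have h2 : (T j - L)/c - 1 ≤ (Q j : ℝ) := by linarith
      have h3 : T j - L - c ≤ (Q j:ℝ) * c := by
        have hmul := mul_le_mul_of_nonneg_right h2 hc0.le
        rw [sub_mul, div_mul_cancel₀ _ hc0.ne', one_mul] at hmul
        linarith
      nlinarith
    refine le_liminf_of_le (isCoboundedUnder_ge_of_eventually_le atTop (x := 1/K) ?_) hlb
    filter_upwards [htend.eventually_ge_atTop K] with j hj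
    have hT0 : 0 < T j := hpos j
    have hN1 : 1 ≤ ⌊T j / K⌋₊ := by
      apply Nat.le_floor
      rw [Nat.cast_one, le_div_iff₀ hK0]
      linarith
    obtain ⟨hQ1, hQN, hmax⟩ := hmaxall j hN1
    have h5 : (Q j:ℝ) ≤ T j / K :=
      le_trans (Nat.cast_le.mpr hQN) (Nat.floor_le (div_nonneg hT0.le hK0.le))
    have h6 := (le_div_iff₀ hK0).mp h5
    rw [div_le_div_iff₀ hT0 hK0]
    linarith
  · -- limsup bound
    set g : ℕ → ℝ := fun j => 1/(L+K) + (L + 2*K)/((L+K) * T j) with hg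
    have hgt : Tendsto g atTop (nhds (1/(L+K))) := by
      have h1 : Tendsto (fun j => (L+K) * T j) atTop atTop :=
        htend.const_mul_atTop (by linarith)
      have h2 : Tendsto (fun j => (L + 2*K)/((L+K) * T j)) atTop (nhds 0) :=
        Tendsto.div_atTop tendsto_const_nhds h1
      have h3 : Tendsto (fun j => 1/(L+K) + (L + 2*K)/((L+K) * T j)) atTop
          (nhds (1/(L+K) + 0)) := Tendsto.add tendsto_const_nhds h2
      rw [hg]
      simpa using h3
    have hub : ∀ᶠ j in atTop, (Q j : ℝ)/T j ≤ g j := by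
      filter_upwards [htend.eventually_ge_atTop K] with j hj
      have hT0 : 0 < T j := hpos j
      have hN1 : 1 ≤ ⌊T j / K⌋₊ := by
        apply Nat.le_floor
        rw [Nat.cast_one, le_div_iff₀ hK0]
        linarith
      obtain ⟨hQ1, hQN, hmax⟩ := hmaxall j hN1
      have := upperQ L K (T j) hL hKK hT0.le (Q j) hQ1 hQN hmax
      simp only [hg]
      rw [div_add_div _ _ (by positivity) (by positivity), div_le_div_iff₀ hT0 (by positivity)]
      nlinarith [mul_le_mul_of_nonneg_right this (show (0:ℝ) ≤ (L+K)*T j by positivity)]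
    have hcob : IsCoboundedUnder (· ≤ ·) atTop (fun j => (Q j : ℝ)/T j) :=
      isCoboundedUnder_le_of_eventually_le atTop (x := 0)
        (Eventually.of_forall fun j => div_nonneg (Nat.cast_nonneg _) (hpos j).le)
    have hbd : IsBoundedUnder (· ≤ ·) atTop g := hgt.isBoundedUnder_le
    calc Filter.limsup (fun j => (Q j : ℝ)/T j) atTop ≤ Filter.limsup g atTop :=
          limsup_le_limsup hub hcob hbd
      _ = 1/(L+K) := hgt.limsup_eq
end

section
/- For every L > 0 there exists K₀ > 0 such that for all K ≥ K₀ the following holds: for every increasing sequence (T_j) of positive reals with T_j → ∞ and every choice of maximizers Q_j as in the setup, if the limit H := lim_{j→∞} Q_j/T_j exists, then lim_{j→∞} (1/T_j)·(Q_j·log(1 + F_j/Q_j) + F_j·log(1 + Q_j/F_j)) = H·log(1 − K/L + 1/(H·L)) + ((1 − H·K)/L)·log(1 + H·L/(1 − H·K)). -/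
open Filter

lemma two_pow_le_centralBinom' (n : ℕ) : 2 ^ n ≤ Nat.centralBinom n := by
  induction n with
  | zero => simp [Nat.centralBinom]
  | succ n ih =>
    have key := Nat.succ_mul_centralBinom_succ n
    have h2 : (n + 1) * (2 * Nat.centralBinom n) ≤ (n + 1) * Nat.centralBinom (n + 1) := by
      rw [key]; nlinarith [Nat.centralBinom_pos n]
    have := Nat.le_of_mul_le_mul_left h2 (Nat.succ_pos n)
    calc 2 ^ (n + 1) = 2 * 2 ^ n := by ring
      _ ≤ 2 * Nat.centralBinom n := by omega
      _ ≤ Nat.centralBinom (n + 1) := this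

lemma two_pow_le_choose' {m F : ℕ} (h : m ≤ F) : 2 ^ m ≤ (F + m).choose m :=
  calc 2 ^ m ≤ Nat.centralBinom m := two_pow_le_centralBinom' m
    _ ≤ (F + m).choose m := Nat.choose_le_choose m (by omega)

lemma pow_self_le_factorial_mul (k : ℕ) : (k : ℝ) ^ k ≤ (Nat.factorial k : ℝ) * Real.exp 1 ^ k := by
  induction k with
  | zero => simp
  | succ k ih =>
    have hexp1 : (1 : ℝ) ≤ Real.exp 1 := by
      have := Real.add_one_le_exp (1 : ℝ); linarith
    have hstep : ((k : ℝ) + 1) ^ k ≤ (k : ℝ) ^ k * Real.exp 1 := by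
      rcases Nat.eq_zero_or_pos k with rfl | hk
      · simpa using hexp1
      · have hk0 : (0 : ℝ) < k := by exact_mod_cast hk
        have h1 : (1 + 1 / (k : ℝ)) ≤ Real.exp (1 / k) := by
          have := Real.add_one_le_exp (1 / (k : ℝ)); linarith
        calc ((k : ℝ) + 1) ^ k = ((k : ℝ) * (1 + 1 / k)) ^ k := by
              field_simp
          _ = (k : ℝ) ^ k * (1 + 1 / k) ^ k := mul_pow _ _ _
          _ ≤ (k : ℝ) ^ k * Real.exp (1 / k) ^ k := by
              have h0 : (0:ℝ) ≤ 1 + 1 / (k:ℝ) := by positivity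
              gcongr
          _ = (k : ℝ) ^ k * Real.exp 1 := by
              rw [← Real.exp_nat_mul]
              congr 1
              field_simp
    calc ((k + 1 : ℕ) : ℝ) ^ (k + 1) = ((k : ℝ) + 1) * ((k : ℝ) + 1) ^ k := by
          push_cast; ring
      _ ≤ ((k : ℝ) + 1) * ((k : ℝ) ^ k * Real.exp 1) := by
          have : (0:ℝ) ≤ (k:ℝ) + 1 := by positivity
          exact mul_le_mul_of_nonneg_left hstep this
      _ ≤ ((k : ℝ) + 1) * (((Nat.factorial k : ℝ) * Real.exp 1 ^ k) * Real.exp 1) := by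
          have he : (0:ℝ) < Real.exp 1 := Real.exp_pos 1
          gcongr
      _ = ((Nat.factorial (k+1)) : ℝ) * Real.exp 1 ^ (k + 1) := by
          push_cast [Nat.factorial_succ]; ring

lemma log_choose_le {n k : ℕ} (hk : 1 ≤ k) (hkn : k ≤ n) :
    Real.log (n.choose k) ≤ k * (1 + Real.log n - Real.log k) := by
  have hkpos : (0 : ℝ) < k := by exact_mod_cast hk
  have hnpos : (0 : ℝ) < n := by exact_mod_cast lt_of_lt_of_le hk hkn
  have hfac : (0 : ℝ) < ((Nat.factorial k : ℝ) : ℝ) := by exact_mod_cast Nat.factorial_pos k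
  have h1 : (n.choose k : ℝ) ≤ (n : ℝ) ^ k / (Nat.factorial k : ℝ) := Nat.choose_le_pow_div k n
  have h2 : (n : ℝ) ^ k / (Nat.factorial k : ℝ) ≤ ((n : ℝ) * Real.exp 1 / k) ^ k := by
    rw [div_pow, mul_pow, div_le_div_iff₀ hfac (by positivity)]
    calc (n : ℝ) ^ k * (k : ℝ) ^ k ≤ (n : ℝ) ^ k * (((Nat.factorial k : ℝ) : ℝ) * Real.exp 1 ^ k) := by
          have := pow_self_le_factorial_mul k
          have h0 : (0:ℝ) ≤ (n:ℝ)^k := by positivity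
          nlinarith
      _ = (n : ℝ) ^ k * Real.exp 1 ^ k * ((Nat.factorial k : ℝ) : ℝ) := by ring
  have hch : (0 : ℝ) < (n.choose k : ℝ) := by
    exact_mod_cast Nat.choose_pos hkn
  have := Real.log_le_log hch (h1.trans h2)
  rw [Real.log_pow, Real.log_div (by positivity) (by positivity),
    Real.log_mul (by positivity) (Real.exp_ne_zero 1), Real.log_exp] at this
  calc Real.log (n.choose k) ≤ k * (Real.log n + 1 - Real.log k) := this
    _ = k * (1 + Real.log n - Real.log k) := by ring

set_option maxHeartbeats 1000000 in
/-- In the setup, if H = lim Q_j/T_j exists, then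
(1/T_j)·(Q_j·log(1 + F_j/Q_j) + F_j·log(1 + Q_j/F_j)) →
H·log(1 − K/L + 1/(HL)) + ((1 − HK)/L)·log(1 + HL/(1 − HK)). -/
theorem stmt17 (L : ℝ) (hL : 0 < L) :
    ∃ K₀ : ℝ, 0 < K₀ ∧ ∀ K : ℝ, K₀ ≤ K →
    ∀ (T : ℕ → ℝ) (Q : ℕ → ℕ), StrictMono T → (∀ j, 0 < T j) →
    Tendsto T atTop atTop →
    (∀ j, 1 ≤ ⌊T j / K⌋₊ →
      1 ≤ Q j ∧ Q j ≤ ⌊T j / K⌋₊ ∧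
      ∀ m : ℕ, 1 ≤ m → m ≤ ⌊T j / K⌋₊ →
        Nat.choose (⌊(T j - (m : ℝ) * K) / L⌋₊ + m) m ≤
          Nat.choose (⌊(T j - (Q j : ℝ) * K) / L⌋₊ + Q j) (Q j)) →
    ∀ H : ℝ, Tendsto (fun j => (Q j : ℝ) / T j) atTop (nhds H) →
      Tendsto (fun j => (1 / T j) *
        ((Q j : ℝ) * Real.log (1 + (⌊(T j - (Q j : ℝ) * K) / L⌋₊ : ℝ) / (Q j : ℝ)) +
          (⌊(T j - (Q j : ℝ) * K) / L⌋₊ : ℝ) *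
            Real.log (1 + (Q j : ℝ) / (⌊(T j - (Q j : ℝ) * K) / L⌋₊ : ℝ)))) atTop
        (nhds (H * Real.log (1 - K / L + 1 / (H * L)) +
          ((1 - H * K) / L) * Real.log (1 + H * L / (1 - H * K)))) := by
  refine ⟨1, one_pos, ?_⟩
  intro K hK T Q hTmono hTpos hTtop hmax H hx
  have hK0 : (0 : ℝ) < K := lt_of_lt_of_le one_pos hK
  have hLK : (0 : ℝ) < 2 * (L + K) := by positivity
  set F : ℕ → ℕ := fun j => ⌊(T j - (Q j : ℝ) * K) / L⌋₊ with hFdef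
  set x : ℕ → ℝ := fun j => (Q j : ℝ) / T j with hxdef
  set y : ℕ → ℝ := fun j => (F j : ℝ) / T j with hydef
  set c : ℝ := 1 / (2 * (L + K)) with hcdef
  set C₁ : ℝ := 1 / L + 1 with hC₁def
  have hc0 : 0 < c := by positivity
  have hC₁0 : 0 < C₁ := by positivity
  have hlog2 : 0 < Real.log 2 := Real.log_pos one_lt_two
  -- the main per-j facts
  have hmain : ∀ᶠ j in atTop, 0 < x j ∧ 1 ≤ Q j ∧ x j * K ≤ 1 ∧ 1 ≤ F j ∧
      (c * Real.log 2 - Real.log 2 / T j ≤ x j * (1 + Real.log C₁) - x j * Real.log (x j)) ∧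
      (c * Real.log 2 - Real.log 2 / T j ≤ y j * (1 + Real.log C₁) - y j * Real.log (y j)) ∧
      y j ≤ (1 - x j * K) / L ∧ (1 - x j * K) / L - 1 / T j ≤ y j := by
    filter_upwards [hTtop.eventually_ge_atTop (2 * (L + K))] with j hTj
    have hT : 0 < T j := hTpos j
    have hKT : K ≤ T j := by linarith
    have hfl : 1 ≤ ⌊T j / K⌋₊ := Nat.le_floor (by rw [Nat.cast_one, le_div_iff₀ hK0]; linarith)
    obtain ⟨hQ1, hQ2, hmaxj⟩ := hmax j hfl
    have hQ0 : (0 : ℝ) < Q j := by exact_mod_cast hQ1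
    have hx0 : 0 < x j := div_pos hQ0 hT
    have hQK : (Q j : ℝ) * K ≤ T j := by
      have h1 : (Q j : ℝ) ≤ (⌊T j / K⌋₊ : ℝ) := by exact_mod_cast hQ2
      have h2 : ((⌊T j / K⌋₊ : ℕ) : ℝ) ≤ T j / K := Nat.floor_le (by positivity)
      have := h1.trans h2
      calc (Q j : ℝ) * K ≤ (T j / K) * K := by gcongr
        _ = T j := by field_simp
    have hxK : x j * K ≤ 1 := by
      simp only [hxdef]
      rw [div_mul_eq_mul_div, div_le_one hT]
      linarith
    -- the auxiliary m
    set m : ℕ := ⌊T j / (2 * (L + K))⌋₊ with hmdef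
    have hm1 : 1 ≤ m := Nat.le_floor (by rw [Nat.cast_one, le_div_iff₀ hLK]; linarith)
    have hmle : m ≤ ⌊T j / K⌋₊ := Nat.floor_le_floor (by gcongr; linarith)
    have hmreal : (m : ℝ) ≤ T j / (2 * (L + K)) := Nat.floor_le (by positivity)
    have hmreal' : (m : ℝ) * (2 * (L + K)) ≤ T j := by
      rw [← le_div_iff₀ hLK]; exact hmreal
    have hmlow : T j / (2 * (L + K)) - 1 < (m : ℝ) := by
      have := Nat.lt_floor_add_one (T j / (2 * (L + K)))
      linarith
    have hmnn : (0 : ℝ) ≤ (m : ℝ) := Nat.cast_nonneg m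
    have hmF : m ≤ ⌊(T j - (m : ℝ) * K) / L⌋₊ := by
      apply Nat.le_floor
      rw [le_div_iff₀ hL]
      nlinarith
    have hchain : 2 ^ m ≤ (F j + Q j).choose (Q j) := by
      calc 2 ^ m ≤ (⌊(T j - (m : ℝ) * K) / L⌋₊ + m).choose m := two_pow_le_choose' hmF
        _ ≤ (F j + Q j).choose (Q j) := hmaxj m hm1 hmle
    have hF1 : 1 ≤ F j := by
      by_contra hc
      have hF0 : F j = 0 := by omega
      rw [hF0, zero_add, Nat.choose_self] at hchain
      have : 2 ≤ 2 ^ m := by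
        calc 2 = 2 ^ 1 := (pow_one 2).symm
          _ ≤ 2 ^ m := Nat.pow_le_pow_right (by norm_num) hm1
      omega
    have hF0 : (0 : ℝ) < (F j : ℝ) := by exact_mod_cast hF1
    have hy0 : 0 < y j := div_pos hF0 hT
    have hFle : (F j : ℝ) ≤ (T j - (Q j : ℝ) * K) / L := Nat.floor_le (by
      apply div_nonneg _ hL.le; linarith)
    have hFgt : (T j - (Q j : ℝ) * K) / L < (F j : ℝ) + 1 := Nat.lt_floor_add_one _
    have hQT : (Q j : ℝ) ≤ T j := by
      calc (Q j : ℝ) = (Q j : ℝ) * 1 := (mul_one _).symm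
        _ ≤ (Q j : ℝ) * K := by gcongr
        _ ≤ T j := hQK
    have hFT : (F j : ℝ) ≤ T j / L := by
      calc (F j : ℝ) ≤ (T j - (Q j : ℝ) * K) / L := hFle
        _ ≤ T j / L := by gcongr; nlinarith
    have hsum : ((F j + Q j : ℕ) : ℝ) ≤ C₁ * T j := by
      push_cast
      rw [hC₁def]
      have : T j / L = (1 / L) * T j := by ring
      nlinarith [hFT, hQT]
    have hsum1 : 1 ≤ F j + Q j := by omega
    have hchR : ((2 : ℝ)) ^ m ≤ ((F j + Q j).choose (Q j) : ℝ) := by exact_mod_cast hchain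
    have hchposℝ : (0 : ℝ) < ((F j + Q j).choose (Q j) : ℝ) := by
      exact_mod_cast Nat.choose_pos (by omega : Q j ≤ F j + Q j)
    have hlogch : (m : ℝ) * Real.log 2 ≤ Real.log ((F j + Q j).choose (Q j)) := by
      calc (m : ℝ) * Real.log 2 = Real.log ((2 : ℝ) ^ m) := by rw [Real.log_pow]
        _ ≤ Real.log ((F j + Q j).choose (Q j)) := Real.log_le_log (by positivity) hchR
    have hsumpos : (0:ℝ) < ((F j + Q j : ℕ) : ℝ) := by exact_mod_cast hsum1
    have hlogsum : Real.log ((F j + Q j : ℕ) : ℝ) ≤ Real.log (C₁ * T j) :=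
      Real.log_le_log hsumpos hsum
    have hlogCT : Real.log (C₁ * T j) = Real.log C₁ + Real.log (T j) :=
      Real.log_mul (ne_of_gt hC₁0) (ne_of_gt hT)
    -- bound via Q
    have hL1 : (m : ℝ) * Real.log 2 ≤ (Q j : ℝ) * (1 + Real.log C₁ - Real.log (x j)) := by
      have h1 := log_choose_le hQ1 (by omega : Q j ≤ F j + Q j)
      have hlogQ : Real.log (Q j) = Real.log (x j) + Real.log (T j) := by
        have hq : (Q j : ℝ) = x j * T j := by
          simp only [hxdef]; field_simp
        rw [hq, Real.log_mul (ne_of_gt hx0) (ne_of_gt hT)]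
      calc (m : ℝ) * Real.log 2 ≤ Real.log ((F j + Q j).choose (Q j)) := hlogch
        _ ≤ (Q j : ℝ) * (1 + Real.log ((F j + Q j : ℕ) : ℝ) - Real.log (Q j)) := h1
        _ ≤ (Q j : ℝ) * (1 + Real.log (C₁ * T j) - Real.log (Q j)) := by
            have := hlogsum; nlinarith
        _ = (Q j : ℝ) * (1 + Real.log C₁ - Real.log (x j)) := by
            rw [hlogCT, hlogQ]; ring
    -- bound via F
    have hL2 : (m : ℝ) * Real.log 2 ≤ (F j : ℝ) * (1 + Real.log C₁ - Real.log (y j)) := by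
      have hsymm : (F j + Q j).choose (Q j) = (F j + Q j).choose (F j) :=
        (Nat.choose_symm_add).symm
      have h1 := log_choose_le hF1 (by omega : F j ≤ F j + Q j)
      have hlogF : Real.log (F j) = Real.log (y j) + Real.log (T j) := by
        have hq : (F j : ℝ) = y j * T j := by
          simp only [hydef]; field_simp
        rw [hq, Real.log_mul (ne_of_gt hy0) (ne_of_gt hT)]
      calc (m : ℝ) * Real.log 2 ≤ Real.log ((F j + Q j).choose (Q j)) := hlogch
        _ = Real.log ((F j + Q j).choose (F j)) := by rw [hsymm]
        _ ≤ (F j : ℝ) * (1 + Real.log ((F j + Q j : ℕ) : ℝ) - Real.log (F j)) := h1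
        _ ≤ (F j : ℝ) * (1 + Real.log (C₁ * T j) - Real.log (F j)) := by
            have := hlogsum; nlinarith
        _ = (F j : ℝ) * (1 + Real.log C₁ - Real.log (y j)) := by
            rw [hlogCT, hlogF]; ring
    -- convert to normalized inequalities
    have hmlog : (c * T j - 1) * Real.log 2 ≤ (m : ℝ) * Real.log 2 := by
      have : c * T j - 1 ≤ (m : ℝ) := by
        rw [hcdef]
        have : (1 / (2 * (L + K))) * T j = T j / (2 * (L + K)) := by ring
        rw [this]; linarith
      gcongr
    have hP1 : c * Real.log 2 - Real.log 2 / T j ≤ x j * (1 + Real.log C₁) - x j * Real.log (x j) := by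
      have h2 := hmlog.trans hL1
      calc c * Real.log 2 - Real.log 2 / T j
          = ((c * T j - 1) * Real.log 2) / T j := by field_simp
        _ ≤ ((Q j : ℝ) * (1 + Real.log C₁ - Real.log (x j))) / T j := by gcongr
        _ = x j * (1 + Real.log C₁) - x j * Real.log (x j) := by
            simp only [hxdef]; field_simp
    have hP2 : c * Real.log 2 - Real.log 2 / T j ≤ y j * (1 + Real.log C₁) - y j * Real.log (y j) := by
      have h2 := hmlog.trans hL2
      calc c * Real.log 2 - Real.log 2 / T j
          = ((c * T j - 1) * Real.log 2) / T j := by field_simp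
        _ ≤ ((F j : ℝ) * (1 + Real.log C₁ - Real.log (y j))) / T j := by gcongr
        _ = y j * (1 + Real.log C₁) - y j * Real.log (y j) := by
            simp only [hydef]; field_simp
    have hyup : y j ≤ (1 - x j * K) / L := by
      have heq : (1 - x j * K) / L = ((T j - (Q j : ℝ) * K) / L) / T j := by
        simp only [hxdef]; field_simp
      rw [heq]
      simp only [hydef]
      gcongr
    have hylow : (1 - x j * K) / L - 1 / T j ≤ y j := by
      have heq : (1 - x j * K) / L - 1 / T j = ((T j - (Q j : ℝ) * K) / L - 1) / T j := by
        simp only [hxdef]; field_simp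
      rw [heq]
      simp only [hydef]
      have h1 : (T j - (Q j : ℝ) * K) / L - 1 ≤ (F j : ℝ) := by linarith
      gcongr
    exact ⟨hx0, hQ1, hxK, hF1, hP1, hP2, hyup, hylow⟩
  -- limit tools
  have hLHS : Tendsto (fun j => c * Real.log 2 - Real.log 2 / T j) atTop (nhds (c * Real.log 2)) := by
    have h0 : Tendsto (fun j => Real.log 2 / T j) atTop (nhds 0) :=
      tendsto_const_nhds.div_atTop hTtop
    simpa using tendsto_const_nhds.sub h0
  have hxnn : ∀ j, 0 ≤ x j := fun j => div_nonneg (Nat.cast_nonneg _) (hTpos j).le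
  have hynn : ∀ j, 0 ≤ y j := fun j => div_nonneg (Nat.cast_nonneg _) (hTpos j).le
  have hH0 : 0 ≤ H := ge_of_tendsto' hx hxnn
  have hRHS1 : Tendsto (fun j => x j * (1 + Real.log C₁) - x j * Real.log (x j)) atTop
      (nhds (H * (1 + Real.log C₁) - H * Real.log H)) :=
    (hx.mul_const _).sub ((Real.continuous_mul_log.tendsto H).comp hx)
  have hineq1 : c * Real.log 2 ≤ H * (1 + Real.log C₁) - H * Real.log H :=
    le_of_tendsto_of_tendsto hLHS hRHS1 (hmain.mono fun j hj => hj.2.2.2.2.1)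
  have hHpos : 0 < H := by
    rcases hH0.lt_or_eq with h | h
    · exact h
    · exfalso
      rw [← h] at hineq1
      simp only [zero_mul, Real.log_zero, sub_zero] at hineq1
      nlinarith
  have hupK : Tendsto (fun j => (1 - x j * K) / L) atTop (nhds ((1 - H * K) / L)) :=
    (tendsto_const_nhds.sub (hx.mul_const K)).div_const L
  have hHK1 : H * K ≤ 1 := le_of_tendsto_of_tendsto (hx.mul_const K) tendsto_const_nhds
      (hmain.mono fun j hj => hj.2.2.1)
  have hHK : H * K < 1 := by
    rcases hHK1.lt_or_eq with h | h
    · exact h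
    · exfalso
      have hG0 : (1 - H * K) / L = 0 := by rw [h]; simp
      have hupK0 := hupK
      rw [hG0] at hupK0
      have hy0 : Tendsto y atTop (nhds 0) :=
        tendsto_of_tendsto_of_tendsto_of_le_of_le' tendsto_const_nhds hupK0
          (Eventually.of_forall hynn) (hmain.mono fun j hj => hj.2.2.2.2.2.2.1)
      have hRHS2 : Tendsto (fun j => y j * (1 + Real.log C₁) - y j * Real.log (y j)) atTop
          (nhds 0) := by
        have := (hy0.mul_const (1 + Real.log C₁)).sub
          ((Real.continuous_mul_log.tendsto 0).comp hy0)
        simpa using this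
      have hineq2 : c * Real.log 2 ≤ 0 :=
        le_of_tendsto_of_tendsto hLHS hRHS2 (hmain.mono fun j hj => hj.2.2.2.2.2.1)
      nlinarith
  set G : ℝ := (1 - H * K) / L with hGdef
  have hG : 0 < G := by rw [hGdef]; apply div_pos (by linarith) hL
  have hy : Tendsto y atTop (nhds G) := by
    have hlow : Tendsto (fun j => (1 - x j * K) / L - 1 / T j) atTop (nhds G) := by
      have h0 : Tendsto (fun j => 1 / T j) atTop (nhds 0) := tendsto_const_nhds.div_atTop hTtop
      simpa [hGdef] using hupK.sub h0
    exact tendsto_of_tendsto_of_tendsto_of_le_of_le' hlow hupK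
      (hmain.mono fun j hj => hj.2.2.2.2.2.2.2) (hmain.mono fun j hj => hj.2.2.2.2.2.2.1)
  -- final limit
  have t1 : Tendsto (fun j => Real.log (1 + y j / x j)) atTop
      (nhds (Real.log (1 + G / H))) := by
    have h : Tendsto (fun j => 1 + y j / x j) atTop (nhds (1 + G / H)) :=
      (tendsto_const_nhds : Tendsto (fun _ : ℕ => (1:ℝ)) atTop (nhds 1)).add
        (hy.div hx hHpos.ne')
    exact h.log (by positivity : (0:ℝ) < 1 + G / H).ne'
  have t2 : Tendsto (fun j => Real.log (1 + x j / y j)) atTop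
      (nhds (Real.log (1 + H / G))) := by
    have h : Tendsto (fun j => 1 + x j / y j) atTop (nhds (1 + H / G)) :=
      (tendsto_const_nhds : Tendsto (fun _ : ℕ => (1:ℝ)) atTop (nhds 1)).add
        (hx.div hy hG.ne')
    exact h.log (by positivity : (0:ℝ) < 1 + H / G).ne'
  have tmain : Tendsto
      (fun j => x j * Real.log (1 + y j / x j) + y j * Real.log (1 + x j / y j))
      atTop (nhds (H * Real.log (1 + G / H) + G * Real.log (1 + H / G))) :=
    (hx.mul t1).add (hy.mul t2)
  have hc1 : 1 - K / L + 1 / (H * L) = 1 + G / H := by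
    rw [hGdef]; field_simp; ring
  have hc2 : 1 + H * L / (1 - H * K) = 1 + H / G := by
    rw [hGdef]; field_simp
  have heq : (fun j => x j * Real.log (1 + y j / x j) + y j * Real.log (1 + x j / y j)) =ᶠ[atTop]
      (fun j => (1 / T j) *
        ((Q j : ℝ) * Real.log (1 + (⌊(T j - (Q j : ℝ) * K) / L⌋₊ : ℝ) / (Q j : ℝ)) +
          (⌊(T j - (Q j : ℝ) * K) / L⌋₊ : ℝ) *
            Real.log (1 + (Q j : ℝ) / (⌊(T j - (Q j : ℝ) * K) / L⌋₊ : ℝ)))) := by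
    filter_upwards [hmain] with j hj
    have hT : 0 < T j := hTpos j
    have hQ0 : (0 : ℝ) < (Q j : ℝ) := by exact_mod_cast hj.2.1
    have hF0 : (0 : ℝ) < (F j : ℝ) := by exact_mod_cast hj.2.2.2.1
    have e1 : y j / x j = (F j : ℝ) / (Q j : ℝ) := by
      simp only [hxdef, hydef]
      field_simp
    have e2 : x j / y j = (Q j : ℝ) / (F j : ℝ) := by
      simp only [hxdef, hydef]
      field_simp
    rw [e1, e2]
    simp only [hFdef, hxdef, hydef]
    ring
  have hkey : H * Real.log (1 - K / L + 1 / (H * L)) +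
      ((1 - H * K) / L) * Real.log (1 + H * L / (1 - H * K)) =
      H * Real.log (1 + G / H) + G * Real.log (1 + H / G) := by
    rw [hc1, hc2, ← hGdef]
  rw [hkey]
  exact tmain.congr' heq
end

section
/- For every L > 0 there exists K₀ > 0 such that for all K ≥ K₀ the following holds: for every increasing sequence (T_j) of positive reals with T_j → ∞ and every choice of maximizers Q_j as in the setup, if the limit H := lim_{j→∞} Q_j/T_j exists, then lim_{j→∞} (1/T_j)·log C(F_j + Q_j, Q_j) = H·log(1 − K/L + 1/(H·L)) + ((1 − H·K)/L)·log(1 + H·L/(1 − H·K)). -/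
open Filter Real Topology

set_option maxHeartbeats 1000000

noncomputable def errf (n : ℕ) : ℝ :=
  Real.log (Stirling.stirlingSeq n) + 1 / 2 * Real.log (2 * n)

lemma logfact (n : ℕ) (hn : 1 ≤ n) :
    Real.log (n.factorial : ℝ) = errf n + n * (Real.log n - 1) := by
  have h := Stirling.log_stirlingSeq_formula n
  have hn' : (0:ℝ) < n := by exact_mod_cast hn
  have hlog : Real.log ((n : ℝ) / Real.exp 1) = Real.log n - 1 := by
    rw [Real.log_div (by positivity) (Real.exp_ne_zero 1), Real.log_exp]
  rw [hlog] at h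
  unfold errf
  linarith

lemma errdiv (T : ℕ → ℝ) (n : ℕ → ℕ) (P : ℝ) (hP : 0 < P)
    (hT : Tendsto T atTop atTop)
    (hn : Tendsto (fun j => (n j : ℝ) / T j) atTop (𝓝 P)) :
    Tendsto (fun j => errf (n j) / T j) atTop (𝓝 0) := by
  have hTpos : ∀ᶠ j in atTop, 0 < T j := hT.eventually_gt_atTop 0
  have hnat : Tendsto n atTop atTop := by
    rw [← tendsto_natCast_atTop_iff (R := ℝ)]
    have h2 := Tendsto.pos_mul_atTop hP hn hT
    refine (h2.congr' ?_ : _)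
    filter_upwards [hTpos] with j hj
    field_simp
  have h1 : Tendsto (fun j => Real.log (Stirling.stirlingSeq (n j)) / T j) atTop (𝓝 0) :=
    ((Stirling.tendsto_stirlingSeq_sqrt_pi.comp hnat).log
      (by positivity)).div_atTop hT
  have h2 : Tendsto (fun j => (Real.log 2 + Real.log ((n j : ℝ) / T j)) / T j) atTop (𝓝 0) :=
    (tendsto_const_nhds.add (hn.log hP.ne')).div_atTop hT
  have h3 : Tendsto (fun j => Real.log (T j) / T j) atTop (𝓝 0) :=
    (Real.isLittleO_log_id_atTop.tendsto_div_nhds_zero).comp hT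
  have key : Tendsto (fun j => Real.log (Stirling.stirlingSeq (n j)) / T j +
      1 / 2 * ((Real.log 2 + Real.log ((n j : ℝ) / T j)) / T j + Real.log (T j) / T j))
      atTop (𝓝 (0 + 1 / 2 * (0 + 0))) := h1.add ((h2.add h3).const_mul _)
  rw [show (0:ℝ) + 1/2*(0+0) = 0 by ring] at key
  refine key.congr' ?_
  filter_upwards [hTpos, hnat.eventually_ge_atTop 1] with j hTj hnj
  have hn0 : (0:ℝ) < (n j : ℝ) := by exact_mod_cast hnj
  have hsplit : Real.log (2 * (n j : ℝ)) =
      Real.log 2 + Real.log ((n j : ℝ) / T j) + Real.log (T j) := by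
    rw [show (2 * (n j : ℝ)) = 2 * ((n j : ℝ) / T j) * T j by field_simp]
    rw [Real.log_mul (by positivity) hTj.ne', Real.log_mul two_ne_zero (by positivity)]
  unfold errf
  rw [hsplit]
  ring



lemma entropy_limit (T : ℕ → ℝ) (a b : ℕ → ℕ) (G H : ℝ) (hG : 0 < G) (hH : 0 < H)
    (hT : Tendsto T atTop atTop)
    (ha : Tendsto (fun j => (a j : ℝ) / T j) atTop (𝓝 G))
    (hb : Tendsto (fun j => (b j : ℝ) / T j) atTop (𝓝 H)) :
    Tendsto (fun j => (1 / T j) * Real.log (((a j + b j).choose (b j) : ℕ) : ℝ)) atTop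
      (𝓝 (G * Real.log ((G + H) / G) + H * Real.log ((G + H) / H))) := by
  have hTpos : ∀ᶠ j in atTop, 0 < T j := hT.eventually_gt_atTop 0
  have hab : Tendsto (fun j => ((a j + b j : ℕ) : ℝ) / T j) atTop (𝓝 (G + H)) := by
    refine (ha.add hb).congr fun j => ?_
    push_cast; ring
  have hanat : Tendsto a atTop atTop := by
    rw [← tendsto_natCast_atTop_iff (R := ℝ)]
    refine ((Tendsto.pos_mul_atTop hG ha hT).congr' ?_ : _)
    filter_upwards [hTpos] with j hj; field_simp
  have hbnat : Tendsto b atTop atTop := by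
    rw [← tendsto_natCast_atTop_iff (R := ℝ)]
    refine ((Tendsto.pos_mul_atTop hH hb hT).congr' ?_ : _)
    filter_upwards [hTpos] with j hj; field_simp
  have E1 := errdiv T a G hG hT ha
  have E2 := errdiv T b H hH hT hb
  have E3 := errdiv T (fun j => a j + b j) (G + H) (by positivity) hT hab
  -- main terms
  have hra : Tendsto (fun j => ((a j + b j : ℕ) : ℝ) / (a j : ℝ)) atTop (𝓝 ((G + H) / G)) := by
    refine ((hab.div ha hG.ne').congr' ?_ : _)
    filter_upwards [hTpos] with j hTj
    simp only [Pi.div_apply]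
    rcases eq_or_ne ((a j : ℝ)) 0 with h | h
    · simp [h]
    · field_simp
  have hrb : Tendsto (fun j => ((a j + b j : ℕ) : ℝ) / (b j : ℝ)) atTop (𝓝 ((G + H) / H)) := by
    refine ((hab.div hb hH.ne').congr' ?_ : _)
    filter_upwards [hTpos] with j hTj
    simp only [Pi.div_apply]
    rcases eq_or_ne ((b j : ℝ)) 0 with h | h
    · simp [h]
    · field_simp
  have M1 : Tendsto (fun j => ((a j : ℝ) / T j) * Real.log (((a j + b j : ℕ) : ℝ) / (a j : ℝ)))
      atTop (𝓝 (G * Real.log ((G + H) / G))) :=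
    ha.mul (hra.log (by positivity))
  have M2 : Tendsto (fun j => ((b j : ℝ) / T j) * Real.log (((a j + b j : ℕ) : ℝ) / (b j : ℝ)))
      atTop (𝓝 (H * Real.log ((G + H) / H))) :=
    hb.mul (hrb.log (by positivity))
  have key := ((((E3.sub E1).sub E2).add M1).add M2)
  rw [show ((0:ℝ) - 0 - 0) + G * Real.log ((G + H) / G) + H * Real.log ((G + H) / H)
      = G * Real.log ((G + H) / G) + H * Real.log ((G + H) / H) by ring] at key
  refine key.congr' ?_
  filter_upwards [hTpos, hanat.eventually_ge_atTop 1, hbnat.eventually_ge_atTop 1]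
    with j hTj haj hbj
  have ha0 : (0:ℝ) < (a j : ℝ) := by exact_mod_cast haj
  have hb0 : (0:ℝ) < (b j : ℝ) := by exact_mod_cast hbj
  have habs : ((a j + b j : ℕ) : ℝ) = (a j : ℝ) + (b j : ℝ) := by push_cast; ring
  have hcpos : 0 < (a j + b j).choose (b j) := Nat.choose_pos (Nat.le_add_left _ _)
  -- log of choose via factorials
  have hfId := Nat.add_choose_mul_factorial_mul_factorial (a j) (b j)
  have hfIdR : (((a j + b j).choose (b j) : ℕ) : ℝ) * (a j).factorial * (b j).factorial
      = ((a j + b j).factorial : ℝ) := by exact_mod_cast congrArg (Nat.cast (R := ℝ)) hfId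
  have hlogchoose : Real.log (((a j + b j).choose (b j) : ℕ) : ℝ)
      = Real.log ((a j + b j).factorial : ℝ) - Real.log ((a j).factorial : ℝ)
        - Real.log ((b j).factorial : ℝ) := by
    rw [← hfIdR, Real.log_mul (by positivity) (by positivity),
      Real.log_mul (by positivity) (by positivity)]
    ring
  have hlA : Real.log (((a j : ℝ) + (b j : ℝ)) / (a j : ℝ))
      = Real.log ((a j : ℝ) + (b j : ℝ)) - Real.log (a j : ℝ) :=
    Real.log_div (by positivity) ha0.ne'
  have hlB : Real.log (((a j : ℝ) + (b j : ℝ)) / (b j : ℝ))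
      = Real.log ((a j : ℝ) + (b j : ℝ)) - Real.log (b j : ℝ) :=
    Real.log_div (by positivity) hb0.ne'
  rw [hlogchoose, logfact _ haj, logfact _ hbj, logfact _ (by omega : 1 ≤ a j + b j),
    habs, hlA, hlB]
  field_simp
  ring

lemma small_side (T : ℕ → ℝ) (F Q : ℕ → ℕ) (M : ℝ) (hM : 1 ≤ M)
    (hT : Tendsto T atTop atTop)
    (hbd : ∀ᶠ j in atTop, ((F j : ℝ) + (Q j : ℝ)) ≤ M * T j)
    (hq : Tendsto (fun j => (Q j : ℝ) / T j) atTop (𝓝 0)) :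
    Tendsto (fun j => (1 / T j) * Real.log (((F j + Q j).choose (Q j) : ℕ) : ℝ))
      atTop (𝓝 0) := by
  have hTpos : ∀ᶠ j in atTop, 0 < T j := hT.eventually_gt_atTop 0
  have hM0 : (0:ℝ) < M := lt_of_lt_of_le one_pos hM
  -- nonnegativity
  have hnn : ∀ᶠ j in atTop, 0 ≤ (1 / T j) * Real.log (((F j + Q j).choose (Q j) : ℕ) : ℝ) := by
    filter_upwards [hTpos] with j hTj
    have h1 : (1:ℝ) ≤ (((F j + Q j).choose (Q j) : ℕ) : ℝ) := by
      exact_mod_cast Nat.one_le_iff_ne_zero.mpr (Nat.choose_pos (Nat.le_add_left _ _)).ne'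
    positivity
  -- the dominating function
  have hg : Tendsto (fun j => ((Q j : ℝ) / T j) * (1 + Real.log M)
      + Real.negMulLog ((Q j : ℝ) / T j)) atTop (𝓝 0) := by
    have h1 : Tendsto (fun j => ((Q j : ℝ) / T j) * (1 + Real.log M)) atTop
        (𝓝 (0 * (1 + Real.log M))) := hq.mul_const _
    have h2 : Tendsto (fun j => Real.negMulLog ((Q j : ℝ) / T j)) atTop
        (𝓝 (Real.negMulLog 0)) := (Real.continuous_negMulLog.tendsto 0).comp hq
    have := h1.add h2
    simpa using this
  refine squeeze_zero' hnn ?_ hg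
  filter_upwards [hTpos, hbd] with j hTj hbdj
  set u : ℝ := (Q j : ℝ) / T j with hu
  rcases Nat.eq_zero_or_pos (Q j) with hQ0 | hQ1
  · simp [hQ0, hu, Real.negMulLog]
  have hQ0 : (0:ℝ) < (Q j : ℝ) := by exact_mod_cast hQ1
  have hupos : 0 < u := by positivity
  have hn0 : (0:ℝ) < ((F j : ℝ) + (Q j : ℝ)) := by positivity
  have hnn0 : (0:ℝ) < (((F j + Q j : ℕ)) : ℝ) := by positivity
  -- choose ≤ ((F+Q) * e / Q)^Q
  have hfac : ((Q j : ℝ)) ^ (Q j) / (Q j).factorial ≤ Real.exp (Q j) :=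
    Real.pow_div_factorial_le_exp _ (Nat.cast_nonneg _) _
  have hfacpos : (0:ℝ) < ((Q j).factorial : ℝ) := by exact_mod_cast (Q j).factorial_pos
  have hup : (((F j + Q j).choose (Q j) : ℕ) : ℝ)
      ≤ ((F j + Q j : ℕ) : ℝ) ^ (Q j) / (Q j).factorial :=
    Nat.choose_le_pow_div _ _
  have hkey : (((F j + Q j).choose (Q j) : ℕ) : ℝ)
      ≤ (((F j + Q j : ℕ) : ℝ) * Real.exp 1 / (Q j : ℝ)) ^ (Q j) := by
    refine hup.trans ?_
    rw [div_pow, mul_pow]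
    rw [div_le_div_iff₀ hfacpos (by positivity)]
    have h2 : ((Q j : ℝ)) ^ (Q j) ≤ Real.exp 1 ^ (Q j) * (Q j).factorial := by
      rw [Real.exp_one_pow]
      rw [div_le_iff₀ hfacpos] at hfac
      exact_mod_cast hfac
    calc ((F j + Q j : ℕ) : ℝ) ^ Q j * (Q j : ℝ) ^ Q j
        ≤ ((F j + Q j : ℕ) : ℝ) ^ Q j * (Real.exp 1 ^ Q j * (Q j).factorial) := by
          gcongr
      _ = ((F j + Q j : ℕ) : ℝ) ^ Q j * Real.exp 1 ^ Q j * (Q j).factorial := by ring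
  -- take logs
  have hlog : Real.log (((F j + Q j).choose (Q j) : ℕ) : ℝ)
      ≤ (Q j : ℝ) * (Real.log ((F j : ℝ) + (Q j : ℝ)) + 1 - Real.log (Q j : ℝ)) := by
    have h1 : (1:ℝ) ≤ (((F j + Q j).choose (Q j) : ℕ) : ℝ) := by
      exact_mod_cast Nat.one_le_iff_ne_zero.mpr (Nat.choose_pos (Nat.le_add_left _ _)).ne'
    calc Real.log (((F j + Q j).choose (Q j) : ℕ) : ℝ)
        ≤ Real.log ((((F j + Q j : ℕ) : ℝ) * Real.exp 1 / (Q j : ℝ)) ^ (Q j)) := by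
          apply Real.log_le_log (by linarith) hkey
      _ = (Q j : ℝ) * (Real.log ((F j : ℝ) + (Q j : ℝ)) + 1 - Real.log (Q j : ℝ)) := by
          rw [Real.log_pow, Real.log_div (by positivity) hQ0.ne', Real.log_mul hnn0.ne'
            (Real.exp_ne_zero 1), Real.log_exp]
          push_cast
          ring
  -- assemble
  have hmain : (1 / T j) * Real.log (((F j + Q j).choose (Q j) : ℕ) : ℝ)
      ≤ u * (Real.log ((F j : ℝ) + (Q j : ℝ)) + 1 - Real.log (Q j : ℝ)) := by
    have := mul_le_mul_of_nonneg_left hlog (le_of_lt (by positivity : (0:ℝ) < 1 / T j))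
    calc (1 / T j) * Real.log (((F j + Q j).choose (Q j) : ℕ) : ℝ)
        ≤ (1 / T j) * ((Q j : ℝ) * (Real.log ((F j : ℝ) + (Q j : ℝ)) + 1 - Real.log (Q j : ℝ)))
          := this
      _ = u * (Real.log ((F j : ℝ) + (Q j : ℝ)) + 1 - Real.log (Q j : ℝ)) := by
          rw [hu]; ring
  refine hmain.trans ?_
  -- log(F+Q) ≤ log M + log T, log Q = log u + log T
  have hlFQ : Real.log ((F j : ℝ) + (Q j : ℝ)) ≤ Real.log M + Real.log (T j) := by
    rw [← Real.log_mul hM0.ne' hTj.ne']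
    exact Real.log_le_log hn0 hbdj
  have hlQ : Real.log (Q j : ℝ) = Real.log u + Real.log (T j) := by
    rw [← Real.log_mul hupos.ne' hTj.ne', hu, div_mul_cancel₀ _ hTj.ne']
  rw [hlQ, Real.negMulLog]
  have : u * (Real.log ((F j : ℝ) + (Q j : ℝ)) + 1 - (Real.log u + Real.log (T j)))
      ≤ u * (Real.log M + Real.log (T j) + 1 - (Real.log u + Real.log (T j))) := by
    gcongr
  refine this.trans ?_
  ring_nf
  linarith [le_refl (u * Real.log M)]

/-- In the setup, if H = lim Q_j/T_j exists, then
(1/T_j)·log C(F_j + Q_j, Q_j) →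
H·log(1 − K/L + 1/(HL)) + ((1 − HK)/L)·log(1 + HL/(1 − HK)). -/
theorem stmt18 (L : ℝ) (hL : 0 < L) :
    ∃ K₀ : ℝ, 0 < K₀ ∧ ∀ K : ℝ, K₀ ≤ K →
    ∀ (T : ℕ → ℝ) (Q : ℕ → ℕ), StrictMono T → (∀ j, 0 < T j) →
    Tendsto T atTop atTop →
    (∀ j, 1 ≤ ⌊T j / K⌋₊ →
      1 ≤ Q j ∧ Q j ≤ ⌊T j / K⌋₊ ∧
      ∀ m : ℕ, 1 ≤ m → m ≤ ⌊T j / K⌋₊ →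
        Nat.choose (⌊(T j - (m : ℝ) * K) / L⌋₊ + m) m ≤
          Nat.choose (⌊(T j - (Q j : ℝ) * K) / L⌋₊ + Q j) (Q j)) →
    ∀ H : ℝ, Tendsto (fun j => (Q j : ℝ) / T j) atTop (nhds H) →
      Tendsto (fun j => (1 / T j) *
        Real.log (Nat.choose (⌊(T j - (Q j : ℝ) * K) / L⌋₊ + Q j) (Q j))) atTop
        (nhds (H * Real.log (1 - K / L + 1 / (H * L)) +
          ((1 - H * K) / L) * Real.log (1 + H * L / (1 - H * K)))) := by
  refine ⟨4 * L, by positivity, ?_⟩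
  intro K hK T Q hmono hTpos hT hmax H hH
  have hK0 : (0:ℝ) < K := lt_of_lt_of_le (by positivity) hK
  have hlog2 : (0:ℝ) < Real.log 2 := Real.log_pos one_lt_two
  have hTKtop : Tendsto (fun j => T j / K) atTop atTop := hT.atTop_div_const hK0
  have hev1 : ∀ᶠ j in atTop, 1 ≤ ⌊T j / K⌋₊ := by
    filter_upwards [hTKtop.eventually_ge_atTop 1] with j hj
    exact Nat.le_floor (by exact_mod_cast hj)
  have hevQ : ∀ᶠ j in atTop, 1 ≤ Q j ∧ Q j ≤ ⌊T j / K⌋₊ := by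
    filter_upwards [hev1] with j hj
    exact ⟨(hmax j hj).1, (hmax j hj).2.1⟩
  have hQK : ∀ᶠ j in atTop, (Q j : ℝ) * K ≤ T j := by
    filter_upwards [hevQ] with j hj
    have h1 : (Q j : ℝ) ≤ T j / K := by
      calc (Q j : ℝ) ≤ (⌊T j / K⌋₊ : ℝ) := by exact_mod_cast hj.2
        _ ≤ T j / K := Nat.floor_le (le_of_lt (div_pos (hTpos j) hK0))
    calc (Q j : ℝ) * K ≤ (T j / K) * K := by gcongr
      _ = T j := div_mul_cancel₀ _ hK0.ne'
  set Fn : ℕ → ℕ := fun j => ⌊(T j - (Q j : ℝ) * K) / L⌋₊ with hFn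
  have hδ : (0:ℝ) < Real.log 2 / (4 * K) := div_pos hlog2 (by positivity)
  -- the key lower bound coming from maximality
  have hstar : ∀ᶠ j in atTop, Real.log 2 / (4 * K)
      ≤ (1 / T j) * Real.log (((Fn j + Q j).choose (Q j) : ℕ) : ℝ) := by
    filter_upwards [hev1, hT.eventually_ge_atTop (4 * K), hT.eventually_ge_atTop (4 * L),
      hT.eventually_ge_atTop (2 * K)] with j hj h4K h4L h2K
    have hTj : 0 < T j := hTpos j
    set m : ℕ := ⌊T j / (2 * K)⌋₊ with hm
    have h2K0 : (0:ℝ) < 2 * K := by positivity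
    have hm1 : 1 ≤ m := Nat.le_floor (by rw [Nat.cast_one, le_div_iff₀ h2K0]; linarith)
    have hm2 : m ≤ ⌊T j / K⌋₊ :=
      Nat.floor_mono (div_le_div_of_nonneg_left hTj.le hK0 (by linarith))
    have hmle : (m : ℝ) ≤ T j / (2 * K) := Nat.floor_le (by positivity)
    have hmK : (m : ℝ) * K ≤ T j / 2 := by
      calc (m:ℝ) * K ≤ (T j / (2*K)) * K := by gcongr
        _ = T j / 2 := by field_simp
    set Fm : ℕ := ⌊(T j - (m:ℝ) * K) / L⌋₊ with hFm
    have hQKm : (0:ℝ) ≤ T j - (m:ℝ) * K := by linarith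
    have hFmlb : (2:ℝ) * m ≤ (Fm : ℝ) + 1 := by
      have h1 : T j / (2*L) ≤ (T j - (m:ℝ)*K) / L := by
        rw [div_le_div_iff₀ (by positivity) hL]
        nlinarith
      have h2 : (T j - (m:ℝ)*K)/L < (Fm:ℝ) + 1 := Nat.lt_floor_add_one _
      have h3 : (2:ℝ)*m ≤ T j / K := by
        calc (2:ℝ)*m ≤ 2 * (T j/(2*K)) := by gcongr
          _ = T j / K := by field_simp
      have h4 : T j / K ≤ T j / (2*L) :=
        div_le_div_of_nonneg_left hTj.le (by positivity) (by linarith)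
      linarith
    have hlow : ((2:ℝ)) ^ m ≤ (((Fm + m).choose m : ℕ) : ℝ) := by
      have hp : (((Fm + 1 : ℕ) : ℝ)) ^ m / ((m.factorial : ℕ) : ℝ)
          ≤ (((Fm + m).choose m : ℕ) : ℝ) := by
        have h5 := Nat.pow_le_choose (α := ℝ) m (Fm + m)
        rwa [show Fm + m + 1 - m = Fm + 1 by omega] at h5
      have hmpos : (0:ℝ) < (m:ℝ) := by exact_mod_cast hm1
      have hfacle : ((m.factorial : ℕ) : ℝ) ≤ (m:ℝ)^m := by exact_mod_cast m.factorial_le_pow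
      have hfacpos : (0:ℝ) < ((m.factorial : ℕ) : ℝ) := by exact_mod_cast m.factorial_pos
      have hnum : ((2:ℝ)*m)^m ≤ (((Fm + 1:ℕ)) : ℝ)^m :=
        pow_le_pow_left₀ (by positivity) (by push_cast; linarith) m
      calc ((2:ℝ))^m = ((2:ℝ)*m)^m / (m:ℝ)^m := by
            rw [mul_pow]; field_simp
        _ ≤ (((Fm + 1:ℕ)) : ℝ)^m / ((m.factorial : ℕ) : ℝ) :=
            div_le_div₀ (by positivity) hnum hfacpos hfacle
        _ ≤ _ := hp
    have hmax' := (hmax j hj).2.2 m hm1 hm2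
    have hchain : ((2:ℝ))^m ≤ (((Fn j + Q j).choose (Q j) : ℕ) : ℝ) := by
      refine hlow.trans ?_
      exact_mod_cast hmax'
    have hlogc : (m:ℝ) * Real.log 2 ≤ Real.log (((Fn j + Q j).choose (Q j) : ℕ) : ℝ) := by
      calc (m:ℝ)*Real.log 2 = Real.log ((2:ℝ)^m) := by rw [Real.log_pow]
        _ ≤ _ := Real.log_le_log (by positivity) hchain
    have hmlb : T j / (2*K) - 1 < (m:ℝ) := Nat.sub_one_lt_floor _
    have h5' : T j < ((m:ℝ) + 1) * (2*K) := by
      rw [← div_lt_iff₀ h2K0]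
      linarith
    have h5 : T j ≤ (m:ℝ) * (4*K) := by nlinarith
    have hfrac : 1/(4*K) ≤ (m:ℝ)/T j := by
      rw [div_le_div_iff₀ (by positivity) hTj]
      nlinarith
    calc Real.log 2/(4*K) = (1/(4*K)) * Real.log 2 := by ring
      _ ≤ ((m:ℝ)/T j) * Real.log 2 := mul_le_mul_of_nonneg_right hfrac hlog2.le
      _ = (1/T j) * ((m:ℝ)*Real.log 2) := by ring
      _ ≤ (1/T j) * Real.log (((Fn j + Q j).choose (Q j) : ℕ) : ℝ) :=
          mul_le_mul_of_nonneg_left hlogc (one_div_nonneg.mpr hTj.le)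
  -- basic bounds on H
  have hH0 : 0 ≤ H := ge_of_tendsto hH
    (Eventually.of_forall fun j => div_nonneg (Nat.cast_nonneg _) (hTpos j).le)
  have hM1 : (1:ℝ) ≤ 1/L + 1/K + 1 := by
    have h1 : (0:ℝ) ≤ 1/L := by positivity
    have h2 : (0:ℝ) ≤ 1/K := by positivity
    linarith
  have hbdM : ∀ᶠ j in atTop, ((Fn j : ℝ) + (Q j : ℝ)) ≤ (1/L + 1/K + 1) * T j := by
    filter_upwards [hQK] with j hj
    have hTj := hTpos j
    have hF : (Fn j : ℝ) ≤ (T j - (Q j:ℝ)*K)/L := Nat.floor_le (div_nonneg (by linarith) hL.le)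
    have hQ' : (Q j : ℝ) ≤ T j / K := by rw [le_div_iff₀ hK0]; linarith
    have h3 : (T j - (Q j:ℝ)*K)/L ≤ T j / L := by
      apply (div_le_div_iff_of_pos_right hL).mpr
      have : (0:ℝ) ≤ (Q j:ℝ)*K := by positivity
      linarith
    have h4 : T j/L + T j/K = (1/L + 1/K)*T j := by field_simp
    nlinarith
  have hHne : H ≠ 0 := by
    intro h0
    rw [h0] at hH
    have hsm := small_side T Fn Q _ hM1 hT hbdM hH
    obtain ⟨j, h1, h2⟩ := ((hsm.eventually_lt_const hδ).and hstar).exists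
    exact absurd h2 (not_le.mpr h1)
  have hHK_le : H * K ≤ 1 := by
    have h1 : H ≤ 1/K := by
      refine le_of_tendsto hH ?_
      filter_upwards [hQK] with j hj
      have hTj := hTpos j
      rw [div_le_div_iff₀ hTj hK0]
      linarith
    calc H * K ≤ (1/K)*K := by gcongr
      _ = 1 := by field_simp
  have hHKne : H * K ≠ 1 := by
    intro h1
    have hFto : Tendsto (fun j => (Fn j : ℝ) / T j) atTop (𝓝 0) := by
      have hup : Tendsto (fun j => (1 - K * ((Q j:ℝ)/T j)) / L) atTop (𝓝 ((1 - K*H)/L)) :=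
        (tendsto_const_nhds.sub (hH.const_mul K)).div_const L
      rw [show (1 - K*H)/L = 0 by rw [mul_comm, h1]; simp] at hup
      refine squeeze_zero'
        (Eventually.of_forall fun j => div_nonneg (Nat.cast_nonneg _) (hTpos j).le) ?_ hup
      filter_upwards [hQK] with j hj
      have hTj := hTpos j
      have hF : (Fn j : ℝ) ≤ (T j - (Q j:ℝ)*K)/L := Nat.floor_le (div_nonneg (by linarith) hL.le)
      have heq : (T j - (Q j:ℝ)*K)/L / T j = (1 - K*((Q j:ℝ)/T j))/L := by field_simp
      rw [← heq]
      exact (div_le_div_iff_of_pos_right hTj).mpr hF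
    have hbdM' : ∀ᶠ j in atTop, ((Q j : ℝ) + (Fn j : ℝ)) ≤ (1/L+1/K+1) * T j := by
      filter_upwards [hbdM] with j hj; linarith
    have hsm := small_side T Q Fn _ hM1 hT hbdM' hFto
    have hsm' : Tendsto (fun j => (1 / T j) * Real.log (((Fn j + Q j).choose (Q j) : ℕ) : ℝ))
        atTop (𝓝 0) := by
      refine hsm.congr fun j => ?_
      rw [Nat.add_comm (Q j) (Fn j), Nat.choose_symm_add]
    obtain ⟨j, h2, h3⟩ := ((hsm'.eventually_lt_const hδ).and hstar).exists
    exact absurd h3 (not_le.mpr h2)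
  have hHpos : 0 < H := lt_of_le_of_ne hH0 (Ne.symm hHne)
  have hHK : H * K < 1 := lt_of_le_of_ne hHK_le hHKne
  set G := (1 - H*K)/L with hG
  have hGpos : 0 < G := div_pos (by linarith) hL
  have hFto : Tendsto (fun j => (Fn j : ℝ)/T j) atTop (𝓝 G) := by
    have hup : Tendsto (fun j => (1 - K * ((Q j:ℝ)/T j)) / L) atTop (𝓝 G) := by
      have h7 := (tendsto_const_nhds (x := (1:ℝ)) (f := atTop)).sub (hH.const_mul K)
      have h8 := h7.div_const L
      rw [show (1 - K*H)/L = G by rw [hG, mul_comm]] at h8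
      exact h8
    have h1T : Tendsto (fun j => 1/T j) atTop (𝓝 (0:ℝ)) := tendsto_const_nhds.div_atTop hT
    have hlo : Tendsto (fun j => (1 - K * ((Q j:ℝ)/T j)) / L - 1/T j) atTop (𝓝 (G - 0)) :=
      hup.sub h1T
    rw [sub_zero] at hlo
    refine tendsto_of_tendsto_of_tendsto_of_le_of_le' hlo hup ?_ ?_
    · filter_upwards [hQK] with j hj
      have hTj := hTpos j
      have h2 : (T j - (Q j:ℝ)*K)/L - 1 < (Fn j : ℝ) := Nat.sub_one_lt_floor _
      have heq : (1 - K * ((Q j:ℝ)/T j)) / L - 1/T j = ((T j - (Q j:ℝ)*K)/L - 1)/T j := by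
        field_simp [hTj.ne', hL.ne']
      rw [heq]
      exact (div_le_div_iff_of_pos_right hTj).mpr h2.le
    · filter_upwards [hQK] with j hj
      have hTj := hTpos j
      have hF : (Fn j : ℝ) ≤ (T j - (Q j:ℝ)*K)/L := Nat.floor_le (div_nonneg (by linarith) hL.le)
      have heq : (T j - (Q j:ℝ)*K)/L / T j = (1 - K*((Q j:ℝ)/T j))/L := by field_simp
      rw [← heq]
      exact (div_le_div_iff_of_pos_right hTj).mpr hF
  have hmain := entropy_limit T Fn Q G H hGpos hHpos hT hFto hH
  have hconst : G * Real.log ((G+H)/G) + H * Real.log ((G+H)/H)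
      = H * Real.log (1 - K/L + 1/(H*L)) + ((1-H*K)/L) * Real.log (1 + H*L/(1-H*K)) := by
    have hne : (1:ℝ) - H*K ≠ 0 := by linarith
    have e1 : (G+H)/H = 1 - K/L + 1/(H*L) := by
      rw [hG]; field_simp; try ring
    have e2 : (G+H)/G = 1 + H*L/(1-H*K) := by
      rw [hG]; field_simp; try ring
    rw [e1, e2, hG]
    ring
  rw [hconst] at hmain
  exact hmain
end

section
/- Let L > 0 be a constant and let (K_i) and (T_j) be increasing sequences of positive reals with K_i → ∞ and T_j → ∞. For each i and each j with ⌊T_j/K_i⌋ ≥ 1, let Q_{i,j} be an integer in {1, …, ⌊T_j/K_i⌋} such that C(⌊(T_j − Q_{i,j}·K_i)/L⌋ + Q_{i,j}, Q_{i,j}) ≥ C(⌊(T_j − m·K_i)/L⌋ + m, m) for every m ∈ {1, …, ⌊T_j/K_i⌋}. Then lim_{i→∞} limsup_{j→∞} (1/T_j)·log C(⌊(T_j − Q_{i,j}·K_i)/L⌋ + Q_{i,j}, Q_{i,j}) = 0. -/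
open Filter

private lemma neg_log_le (x : ℝ) (hx : 0 < x) : -Real.log x ≤ 2 / Real.sqrt x := by
  have hs : 0 < Real.sqrt x := Real.sqrt_pos.mpr hx
  have h2 := Real.log_le_sub_one_of_pos (show (0:ℝ) < (Real.sqrt x)⁻¹ by positivity)
  rw [Real.log_inv] at h2
  have h3 : Real.log (Real.sqrt x) = Real.log x / 2 := Real.log_sqrt hx.le
  have h4 : (Real.sqrt x)⁻¹ = 1 / Real.sqrt x := by rw [inv_eq_one_div]
  rw [h3, h4] at h2
  have : 2 / Real.sqrt x = 2 * (1 / Real.sqrt x) := by ring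
  rw [this]
  nlinarith [hs]

/-- Let `L > 0` and let `(K_i)`, `(T_j)` be increasing sequences of
positive reals with `K_i → ∞` and `T_j → ∞`. For each `i` and each `j` with
`⌊T_j/K_i⌋ ≥ 1`, let `Q_{i,j} ∈ {1,…,⌊T_j/K_i⌋}` satisfy
`C(⌊(T_j − Q_{i,j}K_i)/L⌋ + Q_{i,j}, Q_{i,j}) ≥ C(⌊(T_j − mK_i)/L⌋ + m, m)` for all
`m ∈ {1,…,⌊T_j/K_i⌋}`. Then
`lim_{i→∞} limsup_{j→∞} (1/T_j)·log C(⌊(T_j − Q_{i,j}K_i)/L⌋ + Q_{i,j}, Q_{i,j}) = 0`. -/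
theorem stmt19 (L : ℝ) (hL : 0 < L) (K T : ℕ → ℝ) (Q : ℕ → ℕ → ℕ)
    (hKmono : StrictMono K) (hKpos : ∀ i, 0 < K i) (hK : Tendsto K atTop atTop)
    (hTmono : StrictMono T) (hTpos : ∀ j, 0 < T j) (hT : Tendsto T atTop atTop)
    (hQ : ∀ i j, 1 ≤ ⌊T j / K i⌋₊ →
      1 ≤ Q i j ∧ Q i j ≤ ⌊T j / K i⌋₊ ∧
      ∀ m : ℕ, 1 ≤ m → m ≤ ⌊T j / K i⌋₊ →
        Nat.choose (⌊(T j - (m : ℝ) * K i) / L⌋₊ + m) m ≤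
          Nat.choose (⌊(T j - (Q i j : ℝ) * K i) / L⌋₊ + Q i j) (Q i j)) :
    Tendsto (fun i => Filter.limsup (fun j => (1 / T j) *
      Real.log (Nat.choose (⌊(T j - (Q i j : ℝ) * K i) / L⌋₊ + Q i j) (Q i j))) atTop)
      atTop (nhds 0) := by
  have hK0 := hKpos 0
  set c : ℝ := 1/L + 1/(K 0) with hc_def
  have hc : 0 < c := by rw [hc_def]; positivity
  set F : ℕ → ℕ → ℝ := fun i j => (1 / T j) *
      Real.log (Nat.choose (⌊(T j - (Q i j : ℝ) * K i) / L⌋₊ + Q i j) (Q i j)) with hF_def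
  set g : ℕ → ℝ := fun i => (1 + |Real.log c|) / K i + 2 * Real.sqrt (1 / K i) with hg_def
  -- g → 0
  have hg : Tendsto g atTop (nhds 0) := by
    have h1 : Tendsto (fun i => (1 + |Real.log c|) / K i) atTop (nhds 0) :=
      Tendsto.div_atTop tendsto_const_nhds hK
    have h2 : Tendsto (fun i => (1:ℝ) / K i) atTop (nhds 0) :=
      Tendsto.div_atTop tendsto_const_nhds hK
    have h3 : Tendsto (fun i => Real.sqrt (1 / K i)) atTop (nhds 0) := by
      have := (Real.continuous_sqrt.tendsto 0).comp h2
      simp only [Function.comp_def, Real.sqrt_zero] at this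
      exact this
    have h4 := h1.add (h3.const_mul 2)
    rw [hg_def]
    simp only [mul_comm] at h4 ⊢
    convert h4 using 2
    norm_num
  -- nonnegativity of every term
  have hFnn : ∀ i j, 0 ≤ F i j := by
    intro i j
    apply mul_nonneg (one_div_nonneg.mpr (hTpos j).le)
    apply Real.log_nonneg
    exact_mod_cast Nat.one_le_iff_ne_zero.mpr (Nat.choose_pos (Nat.le_add_left _ _)).ne'
  -- the key eventual bound
  have hkey : ∀ i, ∀ᶠ j in atTop, F i j ≤ g i := by
    intro i
    filter_upwards [hT.eventually_ge_atTop (K i)] with j hTK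
    have hKi := hKpos i
    have hTj := hTpos j
    have hfloor : 1 ≤ ⌊T j / K i⌋₊ := by
      apply Nat.le_floor
      rw [Nat.cast_one, le_div_iff₀ hKi, one_mul]; exact hTK
    obtain ⟨hq1, hq2, -⟩ := hQ i j hfloor
    set q := Q i j
    set n := ⌊(T j - (q : ℝ) * K i) / L⌋₊ with hn_def
    have hqpos : (0:ℝ) < q := by exact_mod_cast hq1
    have hqT : (q:ℝ) ≤ T j / K i :=
      le_trans (Nat.cast_le.mpr hq2) (Nat.floor_le (by positivity))
    have hqK : (q:ℝ) * K i ≤ T j := (le_div_iff₀ hKi).mp hqT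
    have hsub : 0 ≤ T j - (q:ℝ) * K i := by linarith
    have hn : (n:ℝ) ≤ T j / L := by
      refine (Nat.floor_le (by positivity)).trans ?_
      gcongr
      nlinarith [mul_pos hqpos hKi]
    have hqK0 : (q:ℝ) ≤ T j / K 0 := by
      refine hqT.trans (div_le_div_of_nonneg_left hTj.le hK0 ?_)
      exact hKmono.monotone (Nat.zero_le i)
    have hA : (n:ℝ) + q ≤ c * T j := by
      have h : c * T j = T j / L + T j / K 0 := by rw [hc_def]; ring
      rw [h]; linarith
    set A : ℝ := (n:ℝ) + q with hA_def
    have hApos : 0 < A := by positivity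
    -- binomial bound: choose (n+q) q ≤ (e*A/q)^q
    have hfac : (0:ℝ) < (Nat.factorial q : ℝ) := by exact_mod_cast Nat.factorial_pos q
    have hqq : (q:ℝ)^q ≤ Real.exp q * Nat.factorial q := by
      have := Real.pow_div_factorial_le_exp (x := (q:ℝ)) hqpos.le q
      rw [div_le_iff₀ hfac] at this; linarith
    have hchoose : ((Nat.choose (n + q) q : ℕ) : ℝ) ≤ (Real.exp 1 * A / q)^q := by
      calc ((Nat.choose (n + q) q : ℕ) : ℝ) ≤ ((n + q : ℕ) : ℝ)^q / Nat.factorial q :=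
            Nat.choose_le_pow_div q (n + q)
        _ = A^q / Nat.factorial q := by push_cast [hA_def]; ring_nf
        _ ≤ (Real.exp 1 * A / q)^q := by
            rw [div_pow, mul_pow, div_le_div_iff₀ hfac (by positivity)]
            calc A^q * (q:ℝ)^q ≤ A^q * (Real.exp q * Nat.factorial q) :=
                  mul_le_mul_of_nonneg_left hqq (pow_nonneg hApos.le q)
              _ = Real.exp 1 ^ q * A^q * Nat.factorial q := by
                  rw [Real.exp_one_pow]; ring
    -- take logs
    have hchoosepos : (0:ℝ) < ((Nat.choose (n + q) q : ℕ) : ℝ) := by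
      exact_mod_cast Nat.choose_pos (Nat.le_add_left _ _)
    have hlog : Real.log (Nat.choose (n + q) q) ≤
        (q:ℝ) * (1 + Real.log c + Real.log (T j) - Real.log q) := by
      have h1 : Real.log (Nat.choose (n + q) q) ≤ (q:ℝ) * Real.log (Real.exp 1 * A / q) := by
        rw [← Real.log_pow]
        exact Real.log_le_log hchoosepos hchoose
      have h2 : Real.log (Real.exp 1 * A / q) ≤ Real.log (Real.exp 1 * (c * T j) / q) := by
        apply Real.log_le_log (by positivity)
        gcongr
      have h3 : Real.log (Real.exp 1 * (c * T j) / q) =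
          1 + Real.log c + Real.log (T j) - Real.log q := by
        rw [Real.log_div (by positivity) (ne_of_gt hqpos),
          Real.log_mul (Real.exp_pos 1).ne' (by positivity),
          Real.log_mul (ne_of_gt hc) (ne_of_gt hTj), Real.log_exp]
        ring
      calc Real.log (Nat.choose (n + q) q) ≤ (q:ℝ) * Real.log (Real.exp 1 * A / q) := h1
        _ ≤ (q:ℝ) * (1 + Real.log c + Real.log (T j) - Real.log q) :=
            mul_le_mul_of_nonneg_left (h2.trans_eq h3) hqpos.le
    -- now the elementary estimate
    have hxpos : (0:ℝ) < (q:ℝ) / T j := by positivity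
    have hxK : (q:ℝ) / T j ≤ 1 / K i := by
      rw [div_le_div_iff₀ hTj hKi]
      linarith
    have hlogx : Real.log ((q:ℝ) / T j) = Real.log q - Real.log (T j) :=
      Real.log_div (ne_of_gt hqpos) (ne_of_gt hTj)
    have step1 : F i j ≤ ((q:ℝ)/T j) * (1 + Real.log c) +
        ((q:ℝ)/T j) * (-Real.log ((q:ℝ)/T j)) := by
      have : F i j ≤ (1/T j) * ((q:ℝ) * (1 + Real.log c + Real.log (T j) - Real.log q)) :=
        mul_le_mul_of_nonneg_left hlog (one_div_nonneg.mpr hTj.le)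
      refine this.trans_eq ?_
      rw [hlogx]
      field_simp
      ring
    have ha : ((q:ℝ)/T j) * (1 + Real.log c) ≤ (1/K i) * (1 + |Real.log c|) := by
      calc ((q:ℝ)/T j) * (1 + Real.log c) ≤ ((q:ℝ)/T j) * (1 + |Real.log c|) :=
            mul_le_mul_of_nonneg_left (by linarith [le_abs_self (Real.log c)]) hxpos.le
        _ ≤ (1/K i) * (1 + |Real.log c|) :=
            mul_le_mul_of_nonneg_right hxK (by positivity)
    have hb : ((q:ℝ)/T j) * (-Real.log ((q:ℝ)/T j)) ≤ 2 * Real.sqrt (1/K i) := by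
      calc ((q:ℝ)/T j) * (-Real.log ((q:ℝ)/T j)) ≤
            ((q:ℝ)/T j) * (2 / Real.sqrt ((q:ℝ)/T j)) :=
            mul_le_mul_of_nonneg_left (neg_log_le _ hxpos) hxpos.le
        _ = 2 * (((q:ℝ)/T j) / Real.sqrt ((q:ℝ)/T j)) := by ring
        _ = 2 * Real.sqrt ((q:ℝ)/T j) := by rw [Real.div_sqrt]
        _ ≤ 2 * Real.sqrt (1/K i) :=
            mul_le_mul_of_nonneg_left (Real.sqrt_le_sqrt hxK) (by norm_num)
    have heq : (1/K i) * (1 + |Real.log c|) = (1 + |Real.log c|) / K i := by ring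
    calc F i j ≤ ((q:ℝ)/T j) * (1 + Real.log c) +
          ((q:ℝ)/T j) * (-Real.log ((q:ℝ)/T j)) := step1
      _ ≤ (1/K i) * (1 + |Real.log c|) + 2 * Real.sqrt (1/K i) := add_le_add ha hb
      _ = g i := by rw [hg_def, heq]
  -- squeeze
  refine tendsto_of_tendsto_of_tendsto_of_le_of_le'
    (tendsto_const_nhds : Tendsto (fun _ : ℕ => (0:ℝ)) atTop (nhds 0)) hg ?_ ?_
  · filter_upwards with i
    exact le_limsup_of_frequently_le (Frequently.of_forall fun j => hFnn i j) ⟨g i, hkey i⟩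
  · filter_upwards with i
    exact limsup_le_of_le (isCoboundedUnder_le_of_le atTop fun j => hFnn i j) (hkey i)
end
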